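/- arXiv:0811.2102 — 2 statements merged into one kernel-verified Lean document; each statement's English description precedes it below -/
import Mathlib

section
/- (Khintchine's transference principle.) For every real number ω with 0 < ω < ω_{n−1}(Θ) one has ω_0(Θ) ≥ ω/((n−1)ω + n); moreover, if ω_{n−1}(Θ) is finite then ω_0(Θ) ≤ (ω_{n−1}(Θ) − n + 1)/n. In particular ω_{n−1}(Θ)/((n−1)ω_{n−1}(Θ) + n) ≤ ω_0(Θ) ≤ (ω_{n−1}(Θ) − n + 1)/n. -/
open scoped BigOperators Pointwise

noncomputable section

/-- Coordinates of a degree-`r` multivector in `Λ^r(ℝ^{n+1})`, with respect to the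
orthonormal basis formed by the wedge products `e_{i₁} ∧ ⋯ ∧ e_{i_r}` (`i₁ < ⋯ < i_r`)
of the standard basis vectors. -/
abbrev MultiVec (n r : ℕ) := {S : Finset (Fin (n + 1)) // S.card = r} → ℝ

/-- The Euclidean norm of a multivector. -/
def mvNorm {n r : ℕ} (X : MultiVec n r) : ℝ :=
  Real.sqrt (∑ S, X S ^ 2)

/-- The Euclidean norm of a vector of `ℝ^{n+1}`. -/
def vNorm {n : ℕ} (x : Fin (n + 1) → ℝ) : ℝ :=
  Real.sqrt (∑ i, x i ^ 2)

/-- A multivector is integral if all its coordinates (in the basis of wedge products of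
standard basis vectors) are integers; this encodes `X ∈ Λ^r(ℤ^{n+1})`. -/
def mvIntegral {n r : ℕ} (X : MultiVec n r) : Prop :=
  ∀ S, ∃ k : ℤ, X S = (k : ℝ)

/-- The wedge product `y ∧ X` of a vector `y ∈ ℝ^{n+1}` with a degree-`r` multivector `X`,
in coordinates. -/
def vWedge {n r : ℕ} (y : Fin (n + 1) → ℝ) (X : MultiVec n r) : MultiVec n (r + 1) :=
  fun T => ∑ i ∈ T.1.attach,
    (-1 : ℝ) ^ (T.1.filter (· < i.1)).card * y i.1 *
      X ⟨T.1.erase i.1, by rw [Finset.card_erase_of_mem i.2, T.2]; omega⟩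

/-- A vector of `ℝ^{n+1}` viewed as a degree-one multivector. -/
def vecToMulti {n : ℕ} (x : Fin (n + 1) → ℝ) : MultiVec n 1 :=
  fun S => ∑ i ∈ S.1, x i

/-- The wedge product `x 0 ∧ ⋯ ∧ x r` of `r` vectors of `ℝ^{n+1}`; its coordinate at an
`r`-element subset `S` is the corresponding `r × r` minor of the matrix whose columns are
the `x j`. -/
def multiWedge {n r : ℕ} (x : Fin r → Fin (n + 1) → ℝ) : MultiVec n r :=
  fun S => Matrix.det (Matrix.of fun a b : Fin r => x b ((S.1.orderIsoOfFin S.2 a : Fin (n + 1))))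

/-- The contraction (internal product) `y ⌟ Z` of a degree-`(r+1)` multivector `Z` by a
vector `y ∈ ℝ^{n+1}`: the unique degree-`r` multivector satisfying
`W · (y ⌟ Z) = (W ∧ y) · Z` for every degree-`r` multivector `W`, written in coordinates. -/
def vContract {n r : ℕ} (y : Fin (n + 1) → ℝ) (Z : MultiVec n (r + 1)) : MultiVec n r :=
  fun S => ∑ i ∈ (S.1ᶜ).attach,
    (-1 : ℝ) ^ (S.1.filter (fun j => i.1 < j)).card * y i.1 *
      Z ⟨insert i.1 S.1, by
        rw [Finset.card_insert_of_notMem (Finset.mem_compl.mp i.2), S.2]⟩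

/-- The point `y = (1, θ₁, …, θₙ) ∈ ℝ^{n+1}` of homogeneous coordinates of `Θ ∈ ℝⁿ`. -/
def yTheta {n : ℕ} (θ : Fin n → ℝ) : Fin (n + 1) → ℝ :=
  Fin.cons 1 θ

/-- The exponent `ω_d(Θ)`: the supremum (in `ℝ ∪ {±∞}`) of the real numbers `ω` for which
there exist infinitely many nonzero integer multivectors `X ∈ Λ^{d+1}(ℤ^{n+1})` with
`|y ∧ X| ≤ |X|^{-ω}`. -/
def omegaExp (n : ℕ) (θ : Fin n → ℝ) (d : ℕ) : EReal :=
  sSup {w : EReal | ∃ ω : ℝ, w = (ω : EReal) ∧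
    {X : MultiVec n (d + 1) | mvIntegral X ∧ X ≠ 0 ∧
      mvNorm (vWedge (yTheta θ) X) ≤ mvNorm X ^ (-ω)}.Infinite}

/-- `max_{0 ≤ i ≤ n} |x_i|` of an integer tuple, as a real number. -/
def maxAbs {n : ℕ} (x : Fin (n + 1) → ℤ) : ℝ :=
  ((Finset.univ.sup (fun i => (x i).natAbs) : ℕ) : ℝ)

/-- `ω_0(Θ)` (Definition 1): the supremum (in `ℝ ∪ {±∞}`) of the real numbers `ω` for
which there exist infinitely many integer `(n+1)`-tuples `(x₀, …, xₙ)` with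
`max_{1 ≤ i ≤ n} |x₀ θ_i - x_i| ≤ (max_{0 ≤ i ≤ n} |x_i|)^{-ω}`. -/
def omega0T (n : ℕ) (θ : Fin n → ℝ) : EReal :=
  sSup {w : EReal | ∃ ω : ℝ, w = (ω : EReal) ∧
    {x : Fin (n + 1) → ℤ |
      ∀ i : Fin n, |(x 0 : ℝ) * θ i - (x i.succ : ℝ)| ≤ maxAbs x ^ (-ω)}.Infinite}

/-- `ω_{n-1}(Θ)` (Definition 1): the supremum (in `ℝ ∪ {±∞}`) of the real numbers `ω` for
which there exist infinitely many integer `(n+1)`-tuples `(x₀, …, xₙ)` with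
`|x₀ + x₁θ₁ + ⋯ + xₙθₙ| ≤ (max_{0 ≤ i ≤ n} |x_i|)^{-ω}`. -/
def omegaLastT (n : ℕ) (θ : Fin n → ℝ) : EReal :=
  sSup {w : EReal | ∃ ω : ℝ, w = (ω : EReal) ∧
    {x : Fin (n + 1) → ℤ |
      |(x 0 : ℝ) + ∑ i : Fin n, (x i.succ : ℝ) * θ i| ≤ maxAbs x ^ (-ω)}.Infinite}

/-- `ω̂_0(Θ)` (Definition 2). -/
def omegaHat0 (n : ℕ) (θ : Fin n → ℝ) : EReal :=
  sSup {w : EReal | ∃ ω : ℝ, w = (ω : EReal) ∧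
    ∀ᶠ X : ℝ in Filter.atTop, ∃ x : Fin (n + 1) → ℤ, x ≠ 0 ∧
      (∀ j, |(x j : ℝ)| ≤ X) ∧
      ∀ i : Fin n, |(x 0 : ℝ) * θ i - (x i.succ : ℝ)| ≤ X ^ (-ω)}

/-- `ω̂_{n-1}(Θ)` (Definition 2). -/
def omegaHatLast (n : ℕ) (θ : Fin n → ℝ) : EReal :=
  sSup {w : EReal | ∃ ω : ℝ, w = (ω : EReal) ∧
    ∀ᶠ X : ℝ in Filter.atTop, ∃ x : Fin (n + 1) → ℤ, x ≠ 0 ∧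
      (∀ j, |(x j : ℝ)| ≤ X) ∧
      |(x 0 : ℝ) + ∑ i : Fin n, (x i.succ : ℝ) * θ i| ≤ X ^ (-ω)}

/-- The `r`-th compound of a subset `C` of `ℝ^{n+1}`: the convex hull in `Λ^r(ℝ^{n+1})`
of the wedge products `z₁ ∧ ⋯ ∧ z_r` of `r` elements of `C`. -/
def compoundBody {n : ℕ} (r : ℕ) (C : Set (Fin (n + 1) → ℝ)) : Set (MultiVec n r) :=
  convexHull ℝ {Z | ∃ z : Fin r → Fin (n + 1) → ℝ, (∀ j, z j ∈ C) ∧ Z = multiWedge z}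

/-- The `k`-th successive minimum of a subset `C` of `ℝ^{n+1}` with respect to the lattice
`ℤ^{n+1}`: the infimum of the `λ > 0` such that `λ • C` contains `k` linearly independent
integer points. -/
def succMin (n : ℕ) (C : Set (Fin (n + 1) → ℝ)) (k : ℕ) : ℝ :=
  sInf {lam : ℝ | 0 < lam ∧ ∃ v : Fin k → Fin (n + 1) → ℤ,
    LinearIndependent ℝ (fun j => fun i => ((v j i : ℝ))) ∧
    ∀ j, (fun i => ((v j i : ℝ))) ∈ lam • C}

namespace KhT

variable {n : ℕ}

def LL (θ : Fin n → ℝ) (u : Fin (n + 1) → ℤ) : ℝ :=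
  (u 0 : ℝ) + ∑ i : Fin n, (u i.succ : ℝ) * θ i

def DD (θ : Fin n → ℝ) (y : Fin (n + 1) → ℤ) (i : Fin n) : ℝ :=
  (y 0 : ℝ) * θ i - (y i.succ : ℝ)

def thM (θ : Fin n → ℝ) : ℝ := 1 + ∑ i, |θ i|

lemma one_le_thM (θ : Fin n → ℝ) : 1 ≤ thM θ := by
  have : 0 ≤ ∑ i, |θ i| := Finset.sum_nonneg fun i _ => abs_nonneg _
  simp [thM]; linarith

lemma abs_th_le (θ : Fin n → ℝ) (i : Fin n) : |θ i| ≤ thM θ - 1 := by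
  have : |θ i| ≤ ∑ j, |θ j| :=
    Finset.single_le_sum (fun j _ => abs_nonneg (θ j)) (Finset.mem_univ i)
  simp [thM]; linarith

lemma cast_natAbs_real (m : ℤ) : ((m.natAbs : ℕ) : ℝ) = |(m : ℝ)| := by
  push_cast [Nat.cast_natAbs]; ring

lemma maxAbs_nonneg (x : Fin (n + 1) → ℤ) : 0 ≤ maxAbs x := Nat.cast_nonneg _

lemma abs_coe_le_maxAbs (x : Fin (n + 1) → ℤ) (j : Fin (n + 1)) :
    |(x j : ℝ)| ≤ maxAbs x := by
  have h : (x j).natAbs ≤ Finset.univ.sup (fun i => (x i).natAbs) :=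
    Finset.le_sup (f := fun i => (x i).natAbs) (Finset.mem_univ j)
  calc |(x j : ℝ)| = ((x j).natAbs : ℝ) := (cast_natAbs_real (x j)).symm
    _ ≤ maxAbs x := Nat.cast_le.mpr h

lemma maxAbs_le_of_forall {x : Fin (n + 1) → ℤ} {B : ℝ}
    (h : ∀ j, |(x j : ℝ)| ≤ B) : maxAbs x ≤ B := by
  obtain ⟨j, _, hj⟩ := Finset.exists_mem_eq_sup (Finset.univ : Finset (Fin (n + 1)))
    ⟨0, Finset.mem_univ 0⟩ (fun i => (x i).natAbs)
  have : maxAbs x = |(x j : ℝ)| := by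
    rw [maxAbs, hj]; exact cast_natAbs_real (x j)
  rw [this]; exact h j

lemma one_le_maxAbs {x : Fin (n + 1) → ℤ} (hx : x ≠ 0) : 1 ≤ maxAbs x := by
  obtain ⟨j, hj⟩ : ∃ j, x j ≠ 0 := by
    by_contra h; push_neg at h; exact hx (funext h)
  have h1 : 1 ≤ (x j).natAbs := Int.natAbs_pos.mpr hj
  have : (x j).natAbs ≤ Finset.univ.sup (fun i => (x i).natAbs) :=
    Finset.le_sup (f := fun i => (x i).natAbs) (Finset.mem_univ j)
  have h2 : 1 ≤ Finset.univ.sup (fun i => (x i).natAbs) := le_trans h1 this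
  exact Nat.one_le_cast.mpr h2

lemma finite_maxAbs_le (B : ℝ) : {x : Fin (n + 1) → ℤ | maxAbs x ≤ B}.Finite := by
  have hs : Set.Finite (Set.pi Set.univ (fun _ : Fin (n + 1) => Set.Icc (-⌈B⌉) ⌈B⌉)) :=
    Set.Finite.pi (fun _ => Set.finite_Icc _ _)
  refine hs.subset ?_
  intro x hx
  intro j _
  have h1 : |(x j : ℝ)| ≤ (⌈B⌉ : ℝ) := le_trans (le_trans (abs_coe_le_maxAbs x j) hx) (Int.le_ceil B)
  have h2 : |x j| ≤ ⌈B⌉ := by exact_mod_cast (by rwa [← Int.cast_abs] at h1 : ((|x j| : ℤ) : ℝ) ≤ (⌈B⌉ : ℝ))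
  exact Set.mem_Icc.mpr (abs_le.mp h2)

lemma exists_gt_maxAbs_of_infinite {S : Set (Fin (n + 1) → ℤ)} (hS : S.Infinite)
    (B : ℝ) : ∃ x ∈ S, B < maxAbs x := by
  by_contra h
  push_neg at h
  exact hS ((finite_maxAbs_le B).subset h)

lemma infinite_of_unbounded {S : Set (Fin (n + 1) → ℤ)}
    (h : ∀ B : ℝ, ∃ x ∈ S, B < maxAbs x) : S.Infinite := by
  intro hfin
  obtain ⟨B, hB⟩ : ∃ B : ℝ, ∀ x ∈ S, maxAbs x ≤ B := by
    classical
    refine ⟨(hfin.toFinset.sup' ?_ maxAbs : ℝ) + 1, ?_⟩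
    · obtain ⟨x, hx, _⟩ := h 0
      exact ⟨x, hfin.mem_toFinset.mpr hx⟩
    · intro x hx
      have := Finset.le_sup' maxAbs (hfin.mem_toFinset.mpr hx)
      linarith
  obtain ⟨x, hx, hgt⟩ := h B
  exact absurd (hB x hx) (not_le.mpr hgt)



variable {θ : Fin n → ℝ}

/-- Key identity. -/
lemma key_identity (θ : Fin n → ℝ) (u y : Fin (n + 1) → ℤ) :
    ∑ i : Fin n, (u i.succ : ℝ) * DD θ y i
      = (y 0 : ℝ) * LL θ u - ∑ j : Fin (n + 1), (u j : ℝ) * (y j : ℝ) := by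
  rw [Fin.sum_univ_succ (f := fun j => (u j : ℝ) * (y j : ℝ))]
  simp only [DD, LL, mul_sub, mul_add, Finset.mul_sum]
  rw [Finset.sum_sub_distrib]
  rw [show (∑ x : Fin n, (u x.succ : ℝ) * ((y 0 : ℝ) * θ x))
      = ∑ x : Fin n, (y 0 : ℝ) * ((u x.succ : ℝ) * θ x) from
    Finset.sum_congr rfl fun i _ => by ring]
  ring

lemma LL_ne_zero (hθ : LinearIndependent ℚ (Fin.cons (1 : ℝ) θ))
    {u : Fin (n + 1) → ℤ} (hu : u ≠ 0) : LL θ u ≠ 0 := by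
  intro h
  have hli := Fintype.linearIndependent_iff.mp hθ (fun j => (u j : ℚ))
  have hsum : ∑ j : Fin (n + 1), ((u j : ℚ)) • ((Fin.cons (1 : ℝ) θ : Fin (n + 1) → ℝ) j) = (0 : ℝ) := by
    rw [Fin.sum_univ_succ]
    simp only [Fin.cons_zero, Fin.cons_succ, Rat.smul_def]
    push_cast
    simpa [LL] using h
  have : ∀ j, (u j : ℚ) = 0 := hli hsum
  exact hu (funext fun j => by exact_mod_cast this j)

lemma DD_all_zero (hn : 0 < n) (hθ : LinearIndependent ℚ (Fin.cons (1 : ℝ) θ))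
    {y : Fin (n + 1) → ℤ} (hy0 : y 0 ≠ 0) (h : ∀ i, DD θ y i = 0) : False := by
  classical
  set i0 : Fin n := ⟨0, hn⟩
  have hli := Fintype.linearIndependent_iff.mp hθ
    (Fin.cons (-(y i0.succ : ℚ)) (fun i => if i = i0 then (y 0 : ℚ) else 0))
  have hsum : ∑ j : Fin (n + 1),
      ((Fin.cons (-(y i0.succ : ℚ)) (fun i => if i = i0 then (y 0 : ℚ) else 0) : Fin (n + 1) → ℚ) j)
        • ((Fin.cons (1 : ℝ) θ : Fin (n + 1) → ℝ) j) = (0 : ℝ) := by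
    rw [Fin.sum_univ_succ]
    simp only [Fin.cons_zero, Fin.cons_succ, Rat.smul_def]
    rw [Finset.sum_eq_single i0]
    · have := h i0
      simp only [DD] at this
      push_cast
      simp only [if_pos rfl]
      push_cast
      linarith
    · intro b _ hb; simp [hb]
    · intro hb; exact absurd (Finset.mem_univ i0) hb
  have := hli hsum 0
  simp only [Fin.cons_zero] at this
  have h2 := hli hsum i0.succ
  rw [Fin.cons_succ] at h2
  simp only [if_pos rfl] at h2
  exact hy0 (by exact_mod_cast h2)

lemma Bcore (hn : 0 < n) (y : Fin (n + 1) → ℤ) (hy : y ≠ 0) :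
    ∃ u : Fin (n + 1) → ℤ, u ≠ 0 ∧ (∑ j, u j * y j) = 0 ∧
      maxAbs u ≤ (n : ℝ) * (maxAbs y) ^ ((n : ℝ)⁻¹) := by
  classical
  set Yn := Finset.univ.sup (fun j => (y j).natAbs) with hYn
  obtain ⟨j0, hj0⟩ : ∃ j, y j ≠ 0 := by
    by_contra h; push_neg at h; exact hy (funext h)
  have hY1 : 1 ≤ Yn :=
    le_trans (Int.natAbs_pos.mpr hj0) (Finset.le_sup (f := fun j => (y j).natAbs) (Finset.mem_univ j0))
  obtain ⟨m, _, hm⟩ := Finset.exists_mem_eq_sup (Finset.univ : Finset (Fin (n + 1)))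
    ⟨0, Finset.mem_univ 0⟩ (fun j => (y j).natAbs)
  set U := ⌊(Yn : ℝ) ^ ((n : ℝ)⁻¹)⌋₊ with hU
  have hYc : (1 : ℝ) ≤ (Yn : ℝ) := Nat.one_le_cast.mpr hY1
  have hrpow1 : (1 : ℝ) ≤ (Yn : ℝ) ^ ((n : ℝ)⁻¹) := by
    calc (1:ℝ) = (1:ℝ) ^ ((n:ℝ)⁻¹) := (Real.one_rpow _).symm
    _ ≤ (Yn : ℝ) ^ ((n : ℝ)⁻¹) := Real.rpow_le_rpow zero_le_one hYc (by positivity)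
  have hU1 : 1 ≤ U := Nat.le_floor (by exact_mod_cast hrpow1)
  have hUlt : Yn < (U + 1) ^ n := by
    have h1 : (Yn : ℝ) = ((Yn : ℝ) ^ ((n : ℝ)⁻¹)) ^ n :=
      (Real.rpow_inv_natCast_pow (Nat.cast_nonneg _) hn.ne').symm
    have h2 : (Yn : ℝ) ^ ((n : ℝ)⁻¹) < ((U : ℝ) + 1) := by
      have := Nat.lt_succ_floor ((Yn : ℝ) ^ ((n : ℝ)⁻¹))
      push_cast at this ⊢; linarith
    have h3 : (Yn : ℝ) < ((U : ℝ) + 1) ^ n := by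
      rw [h1]
      exact pow_lt_pow_left₀ h2 (by positivity) hn.ne'
    exact_mod_cast (by push_cast; exact h3 : (Yn : ℝ) < (((U + 1) ^ n : ℕ) : ℝ))
  -- pigeonhole
  set s : (Fin n → Fin (U + 1)) → ℤ :=
    fun t => ∑ i, ((t i : ℕ) : ℤ) * y (m.succAbove i) with hs
  have hYposZ : (0 : ℤ) < (Yn : ℤ) := by exact_mod_cast hY1
  have hmaps : ∀ t ∈ (Finset.univ : Finset (Fin n → Fin (U + 1))),
      s t % (Yn : ℤ) ∈ Finset.Ico (0 : ℤ) (Yn : ℤ) := by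
    intro t _
    exact Finset.mem_Ico.mpr ⟨Int.emod_nonneg _ hYposZ.ne', Int.emod_lt_of_pos _ hYposZ⟩
  have hcard : (Finset.Ico (0 : ℤ) (Yn : ℤ)).card
      < (Finset.univ : Finset (Fin n → Fin (U + 1))).card := by
    rw [Int.card_Ico, Finset.card_univ, Fintype.card_fun]
    simpa using hUlt
  obtain ⟨t, _, t', _, htne, hteq⟩ :=
    Finset.exists_ne_map_eq_of_card_lt_of_maps_to hcard hmaps
  have hdvd : (Yn : ℤ) ∣ s t' - s t := Int.ModEq.dvd (hteq : s t % _ = s t' % _)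
  have hym : |y m| = (Yn : ℤ) := by
    rw [Int.abs_eq_natAbs, ← hm]
  obtain ⟨q, hq⟩ : ∃ q, s t' - s t = y m * q := by
    obtain ⟨q, hq⟩ := (abs_dvd _ _).mp (hym ▸ hdvd)
    exact ⟨q, hq⟩
  set d : Fin n → ℤ := fun i => ((t' i : ℕ) : ℤ) - ((t i : ℕ) : ℤ) with hd
  set u : Fin (n + 1) → ℤ := m.insertNth (-q) d with hu'
  have hum : u m = -q := Fin.insertNth_apply_same m _ _
  have husa : ∀ i, u (m.succAbove i) = d i := fun i =>
    Fin.insertNth_apply_succAbove m _ _ i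
  have hsum_d : ∑ i, d i * y (m.succAbove i) = s t' - s t := by
    rw [hs]
    rw [← Finset.sum_sub_distrib]
    exact Finset.sum_congr rfl fun i _ => by rw [hd]; ring
  refine ⟨u, ?_, ?_, ?_⟩
  · obtain ⟨i, hi⟩ := Function.ne_iff.mp htne
    have hdi : d i ≠ 0 := by
      have hde : d i = ((t' i : ℕ) : ℤ) - ((t i : ℕ) : ℤ) := rfl
      rw [hde, sub_ne_zero]
      exact fun hc => hi (Fin.ext (by exact_mod_cast hc)).symm
    intro hc
    rw [hc] at husa
    exact hdi ((husa i).symm.trans rfl)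
  · rw [Fin.sum_univ_succAbove (fun j => u j * y j) m]
    rw [hum]
    rw [show ∑ i : Fin n, u (m.succAbove i) * y (m.succAbove i)
        = ∑ i : Fin n, d i * y (m.succAbove i) from
      Finset.sum_congr rfl fun i _ => by rw [husa i]]
    rw [hsum_d, hq]; ring
  · -- bounds
    have hdb : ∀ i, |d i| ≤ (U : ℤ) := by
      intro i
      have h1 : ((t i : ℕ) : ℤ) ≤ (U : ℤ) := by
        exact_mod_cast Nat.le_of_lt_succ (t i).isLt
      have h2 : ((t' i : ℕ) : ℤ) ≤ (U : ℤ) := by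
        exact_mod_cast Nat.le_of_lt_succ (t' i).isLt
      have h3 : (0 : ℤ) ≤ ((t i : ℕ) : ℤ) := by positivity
      have h4 : (0 : ℤ) ≤ ((t' i : ℕ) : ℤ) := by positivity
      have hde : d i = ((t' i : ℕ) : ℤ) - ((t i : ℕ) : ℤ) := rfl
      rw [hde, abs_le]; omega
    have hyb : ∀ j, |y j| ≤ (Yn : ℤ) := by
      intro j
      rw [Int.abs_eq_natAbs]
      exact_mod_cast Finset.le_sup (f := fun j => (y j).natAbs) (Finset.mem_univ j)
    have hqb : |q| ≤ (n : ℤ) * U := by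
      have h1 : |s t' - s t| ≤ (n : ℤ) * U * Yn := by
        rw [← hsum_d]
        calc |∑ i, d i * y (m.succAbove i)| ≤ ∑ i, |d i * y (m.succAbove i)| :=
              Finset.abs_sum_le_sum_abs _ _
        _ ≤ ∑ _i : Fin n, (U : ℤ) * Yn := by
              refine Finset.sum_le_sum fun i _ => ?_
              rw [abs_mul]
              exact mul_le_mul (hdb i) (hyb _) (abs_nonneg _) (by positivity)
        _ = (n : ℤ) * U * Yn := by
              rw [Finset.sum_const, Finset.card_univ, Fintype.card_fin]; push_cast; ring
      have h2 : |y m| * |q| ≤ ((n : ℤ) * U) * Yn := by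
        rw [← abs_mul, ← hq]; exact h1
      rw [hym] at h2
      have := mul_le_mul_of_nonneg_left (le_refl ((n:ℤ)*U)) (le_of_lt hYposZ)
      nlinarith [abs_nonneg q, hYposZ]
    have hub : ∀ j, |(u j : ℝ)| ≤ (n : ℝ) * U := by
      intro j
      by_cases hj : j = m
      · subst hj
        rw [hum]
        have h2 : |(q : ℝ)| ≤ (n : ℝ) * U := by exact_mod_cast hqb
        push_cast
        rw [abs_neg]
        exact h2
      · obtain ⟨i, hi⟩ := Fin.exists_succAbove_eq (hj : j ≠ m)
        rw [← hi, husa i]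
        have h2 : |(d i : ℝ)| ≤ (U : ℝ) := by exact_mod_cast hdb i
        have h3 : (1 : ℝ) ≤ (n : ℝ) := Nat.one_le_cast.mpr hn
        have h4 : (0 : ℝ) ≤ (U : ℝ) := Nat.cast_nonneg U
        nlinarith
    refine le_trans (maxAbs_le_of_forall hub) ?_
    have hUle : (U : ℝ) ≤ (Yn : ℝ) ^ ((n : ℝ)⁻¹) := Nat.floor_le (by positivity)
    have hmy : maxAbs y = (Yn : ℝ) := rfl
    rw [hmy]
    exact mul_le_mul_of_nonneg_left hUle (Nat.cast_nonneg n)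

set_option maxHeartbeats 2000000 in
lemma Acore (hn : 0 < n) (θ : Fin n → ℝ) (u : Fin (n + 1) → ℤ) (K : ℕ) (hK : 1 ≤ K)
    (hU'1 : 1 ≤ Finset.univ.sup (fun i : Fin n => (u i.succ).natAbs))
    (hδ : (K : ℝ) ^ n * |LL θ u| ≤ 1) :
    ∃ y : Fin (n + 1) → ℤ, 1 ≤ y 0 ∧
      (∀ i, |DD θ y i| ≤ (n : ℝ) / K) ∧
      maxAbs y ≤ (thM θ + n) *
        ((K : ℝ) ^ (n - 1) * ((Finset.univ.sup (fun i : Fin n => (u i.succ).natAbs) : ℕ) : ℝ)) := by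
  classical
  set U' := Finset.univ.sup (fun i : Fin n => (u i.succ).natAbs) with hU'
  obtain ⟨k, _, hk⟩ := Finset.exists_mem_eq_sup (Finset.univ : Finset (Fin n))
    ⟨⟨0, hn⟩, Finset.mem_univ _⟩ (fun i : Fin n => (u i.succ).natAbs)
  set N := K ^ (n - 1) * U' with hN
  have hN1 : 1 ≤ N := Nat.one_le_iff_ne_zero.mpr
    (Nat.mul_ne_zero (pow_ne_zero _ (by omega)) (by omega))
  set rest : ℕ → ℤ := fun a =>
    u 0 * a + ∑ j : Fin n, (if j = k then 0 else u j.succ * ⌊(a : ℝ) * θ j⌋) with hrest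
  set cell : ℕ → (Fin n → ℕ) × ℤ := fun a =>
    (fun j => if j = k then 0 else ⌊(K : ℝ) * Int.fract ((a : ℝ) * θ j)⌋₊,
      rest a % (U' : ℤ)) with hcell
  have hU'pos : (0 : ℤ) < (U' : ℤ) := by exact_mod_cast hU'1
  set T := (Fintype.piFinset fun j : Fin n => Finset.range (if j = k then 1 else K)) ×ˢ
    Finset.Ico (0 : ℤ) (U' : ℤ) with hT
  have hmaps : ∀ a ∈ Finset.range (N + 1), cell a ∈ T := by
    intro a _
    rw [hT, Finset.mem_product]
    constructor
    · rw [Fintype.mem_piFinset]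
      intro j
      by_cases hj : j = k
      · simp only [hcell, if_pos hj, Finset.mem_range]
        omega
      · simp only [hcell, if_neg hj, Finset.mem_range]
        have hKpos0 : (0 : ℝ) < (K : ℝ) := by exact_mod_cast hK
        refine Nat.floor_lt (mul_nonneg (le_of_lt hKpos0) (Int.fract_nonneg _)) |>.mpr ?_
        calc (K : ℝ) * Int.fract ((a : ℝ) * θ j) < (K : ℝ) * 1 := by
              have := Int.fract_lt_one ((a : ℝ) * θ j)
              have hKpos : (0 : ℝ) < K := by exact_mod_cast hK
              nlinarith [Int.fract_nonneg ((a : ℝ) * θ j)]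
        _ = (K : ℝ) := mul_one _
    · exact Finset.mem_Ico.mpr ⟨Int.emod_nonneg _ hU'pos.ne', Int.emod_lt_of_pos _ hU'pos⟩
  have hcard : T.card < (Finset.range (N + 1)).card := by
    rw [hT, Finset.card_product, Fintype.card_piFinset, Finset.card_range, Int.card_Ico]
    have h1 : ∏ j : Fin n, (Finset.range (if j = k then 1 else K)).card = K ^ (n - 1) := by
      rw [show (fun j : Fin n => (Finset.range (if j = k then 1 else K)).card)
          = fun j : Fin n => (if j = k then 1 else K) from
        funext fun j => by split_ifs <;> simp [Finset.card_range]]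
      rw [← Finset.mul_prod_erase Finset.univ _ (Finset.mem_univ k), if_pos rfl, one_mul]
      rw [Finset.prod_congr rfl (fun j hj => if_neg (Finset.mem_erase.mp hj).1)]
      rw [Finset.prod_const, Finset.card_erase_of_mem (Finset.mem_univ k), Finset.card_univ,
        Fintype.card_fin]
    rw [h1]
    have h2 : ((U' : ℤ) - 0).toNat = U' := by omega
    rw [h2]
    exact Nat.lt_succ_self _
  obtain ⟨a0, ha0, b0, hb0, hne, heqc⟩ :=
    Finset.exists_ne_map_eq_of_card_lt_of_maps_to hcard hmaps
  have H : ∀ a b : ℕ, a ≤ N → b ≤ N → a < b → cell a = cell b →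
      ∃ y : Fin (n + 1) → ℤ, 1 ≤ y 0 ∧
        (∀ i, |DD θ y i| ≤ (n : ℝ) / K) ∧
        maxAbs y ≤ (thM θ + n) * ((K : ℝ) ^ (n - 1) * ((U' : ℕ) : ℝ)) := by
    intro a b _ hbN hab hc
    have hf : ∀ j, j ≠ k →
        ⌊(K : ℝ) * Int.fract ((a : ℝ) * θ j)⌋₊ = ⌊(K : ℝ) * Int.fract ((b : ℝ) * θ j)⌋₊ := by
      intro j hj
      have := congrFun (congrArg Prod.fst hc) j
      simpa [hcell, if_neg hj] using this
    have hr : rest a % (U' : ℤ) = rest b % (U' : ℤ) := congrArg Prod.snd hc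
    have hdvd : (U' : ℤ) ∣ rest b - rest a := Int.ModEq.dvd hr
    have habs : |u k.succ| = (U' : ℤ) := by
      rw [Int.abs_eq_natAbs, ← hk]
    obtain ⟨q, hq⟩ : ∃ q, rest b - rest a = u k.succ * q := (abs_dvd _ _).mp (habs ▸ hdvd)
    set y : Fin (n + 1) → ℤ := Fin.cons ((b : ℤ) - (a : ℤ))
      (fun i => if i = k then -q else ⌊(b : ℝ) * θ i⌋ - ⌊(a : ℝ) * θ i⌋) with hy
    have hy0 : y 0 = (b : ℤ) - (a : ℤ) := rfl
    have hys : ∀ i : Fin n, y i.succ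
        = if i = k then -q else ⌊(b : ℝ) * θ i⌋ - ⌊(a : ℝ) * θ i⌋ := fun i => rfl
    have hy0pos : 1 ≤ y 0 := by rw [hy0]; omega
    have hy0le : (y 0 : ℝ) ≤ (N : ℝ) := by
      rw [hy0]; push_cast
      have : (b : ℝ) ≤ (N : ℝ) := by exact_mod_cast hbN
      have : (0 : ℝ) ≤ (a : ℝ) := by positivity
      linarith
    -- dot product is zero
    have hdot : ∑ j : Fin (n + 1), u j * y j = 0 := by
      rw [Fin.sum_univ_succ]
      rw [hy0]
      have hsplit : ∑ i : Fin n, u i.succ * y i.succ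
          = u k.succ * (-q) + ∑ i ∈ Finset.univ.erase k,
              u i.succ * (⌊(b : ℝ) * θ i⌋ - ⌊(a : ℝ) * θ i⌋) := by
        rw [← Finset.add_sum_erase Finset.univ (fun i => u i.succ * y i.succ) (Finset.mem_univ k)]
        congr 1
        · rw [hys k, if_pos rfl]
        · exact Finset.sum_congr rfl fun i hi => by
            rw [hys i, if_neg (Finset.mem_erase.mp hi).1]
      have hrestdiff : rest b - rest a
          = u 0 * ((b : ℤ) - a) + ∑ i ∈ Finset.univ.erase k,
              u i.succ * (⌊(b : ℝ) * θ i⌋ - ⌊(a : ℝ) * θ i⌋) := by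
        rw [hrest]
        simp only
        rw [← Finset.add_sum_erase Finset.univ
          (fun j => if j = k then 0 else u j.succ * ⌊(b : ℝ) * θ j⌋) (Finset.mem_univ k)]
        rw [← Finset.add_sum_erase Finset.univ
          (fun j => if j = k then 0 else u j.succ * ⌊(a : ℝ) * θ j⌋) (Finset.mem_univ k)]
        rw [if_pos rfl, if_pos rfl, zero_add, zero_add]
        rw [Finset.sum_congr rfl (fun j hj => if_neg (Finset.mem_erase.mp hj).1),
          Finset.sum_congr rfl (fun j hj => if_neg (Finset.mem_erase.mp hj).1)]
        have hsub : ∑ i ∈ Finset.univ.erase k, u i.succ * (⌊(b : ℝ) * θ i⌋ - ⌊(a : ℝ) * θ i⌋)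
            = (∑ i ∈ Finset.univ.erase k, u i.succ * ⌊(b : ℝ) * θ i⌋)
              - ∑ i ∈ Finset.univ.erase k, u i.succ * ⌊(a : ℝ) * θ i⌋ := by
          rw [← Finset.sum_sub_distrib]
          exact Finset.sum_congr rfl fun j _ => by ring
        rw [hsub]
        ring
      rw [hsplit]
      have hq2 := hq
      rw [hrestdiff] at hq2
      linarith [hq2]
    -- error bounds
    have hKpos : (0 : ℝ) < (K : ℝ) := by exact_mod_cast hK
    have hDsmall : ∀ i : Fin n, i ≠ k → |DD θ y i| ≤ 1 / (K : ℝ) := by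
      intro i hi
      have hD : DD θ y i = Int.fract ((b : ℝ) * θ i) - Int.fract ((a : ℝ) * θ i) := by
        rw [DD, hy0, hys i, if_neg hi, Int.fract, Int.fract]
        push_cast
        ring
      set c := ⌊(K : ℝ) * Int.fract ((a : ℝ) * θ i)⌋₊ with hcdef
      have h1 : (c : ℝ) ≤ (K : ℝ) * Int.fract ((a : ℝ) * θ i) :=
        Nat.floor_le (mul_nonneg (le_of_lt hKpos) (Int.fract_nonneg _))
      have h2 : (K : ℝ) * Int.fract ((a : ℝ) * θ i) < (c : ℝ) + 1 := by
        have := Nat.lt_succ_floor ((K : ℝ) * Int.fract ((a : ℝ) * θ i))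
        push_cast at this; linarith
      have h3 : (c : ℝ) ≤ (K : ℝ) * Int.fract ((b : ℝ) * θ i) := by
        rw [hcdef, hf i hi]
        exact Nat.floor_le (mul_nonneg (le_of_lt hKpos) (Int.fract_nonneg _))
      have h4 : (K : ℝ) * Int.fract ((b : ℝ) * θ i) < (c : ℝ) + 1 := by
        rw [hcdef, hf i hi]
        have := Nat.lt_succ_floor ((K : ℝ) * Int.fract ((b : ℝ) * θ i))
        push_cast at this; linarith
      have h5 : |(K : ℝ) * Int.fract ((b : ℝ) * θ i) - (K : ℝ) * Int.fract ((a : ℝ) * θ i)| ≤ 1 := by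
        rw [abs_le]; constructor <;> linarith
      rw [hD, le_div_iff₀ hKpos]
      calc |Int.fract ((b : ℝ) * θ i) - Int.fract ((a : ℝ) * θ i)| * (K : ℝ)
          = |(Int.fract ((b : ℝ) * θ i) - Int.fract ((a : ℝ) * θ i)) * (K : ℝ)| := by
            rw [abs_mul, abs_of_pos hKpos]
        _ = |(K : ℝ) * Int.fract ((b : ℝ) * θ i) - (K : ℝ) * Int.fract ((a : ℝ) * θ i)| := by
            ring_nf
        _ ≤ 1 := h5
    have hid := key_identity θ u y
    have hdotR : ∑ j : Fin (n + 1), (u j : ℝ) * (y j : ℝ) = 0 := by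
      have h0 : ((∑ j : Fin (n + 1), u j * y j : ℤ) : ℝ) = 0 := by rw [hdot]; norm_num
      push_cast at h0
      exact h0
    rw [hdotR, sub_zero] at hid
    have hksplit : (u k.succ : ℝ) * DD θ y k
        = (y 0 : ℝ) * LL θ u - ∑ i ∈ Finset.univ.erase k, (u i.succ : ℝ) * DD θ y i := by
      rw [← hid, ← Finset.add_sum_erase Finset.univ
        (fun i => (u i.succ : ℝ) * DD θ y i) (Finset.mem_univ k)]
      ring
    have hU'R : |(u k.succ : ℝ)| = (U' : ℝ) := by
      rw [← Int.cast_abs, habs]; push_cast; ring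
    have hU'Rpos : (0 : ℝ) < (U' : ℝ) := by exact_mod_cast hU'1
    have husle : ∀ i : Fin n, |(u i.succ : ℝ)| ≤ (U' : ℝ) := by
      intro i
      have h1 : (u i.succ).natAbs ≤ U' :=
        Finset.le_sup (f := fun i : Fin n => (u i.succ).natAbs) (Finset.mem_univ i)
      rw [← cast_natAbs_real]
      exact_mod_cast h1
    have tri : ∀ x z : ℝ, |x - z| ≤ |x| + |z| := fun x z => by
      rw [sub_eq_add_neg]
      exact le_trans (abs_add_le _ _) (by rw [abs_neg])
    have h6 : |∑ i ∈ Finset.univ.erase k, (u i.succ : ℝ) * DD θ y i|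
        ≤ ((n : ℝ) - 1) * ((U' : ℝ) * (1 / K)) := by
      calc |∑ i ∈ Finset.univ.erase k, (u i.succ : ℝ) * DD θ y i|
          ≤ ∑ i ∈ Finset.univ.erase k, |(u i.succ : ℝ) * DD θ y i| :=
            Finset.abs_sum_le_sum_abs _ _
        _ ≤ ∑ _i ∈ Finset.univ.erase k, (U' : ℝ) * (1 / K) := by
            refine Finset.sum_le_sum fun i hi => ?_
            rw [abs_mul]
            exact mul_le_mul (husle i) (hDsmall i (Finset.mem_erase.mp hi).1)
              (abs_nonneg _) (le_of_lt hU'Rpos)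
        _ = ((n : ℝ) - 1) * ((U' : ℝ) * (1 / K)) := by
            rw [Finset.sum_const, Finset.card_erase_of_mem (Finset.mem_univ k),
              Finset.card_univ, Fintype.card_fin]
            rw [nsmul_eq_mul, Nat.cast_sub hn]
            norm_num
    have habs0 : |(y 0 : ℝ)| ≤ (N : ℝ) := by
      rw [abs_of_pos (by exact_mod_cast hy0pos : (0 : ℝ) < (y 0 : ℝ))]
      exact hy0le
    have hNdelta : (N : ℝ) * |LL θ u| ≤ (U' : ℝ) / K := by
      rw [le_div_iff₀ hKpos]
      have hNR : (N : ℝ) = (K : ℝ) ^ (n - 1) * (U' : ℝ) := by rw [hN]; push_cast; ring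
      have hpow : (K : ℝ) ^ (n - 1) * (K : ℝ) = (K : ℝ) ^ n := by
        rw [← pow_succ, Nat.sub_add_cancel hn]
      calc (N : ℝ) * |LL θ u| * K = ((K : ℝ) ^ n * |LL θ u|) * (U' : ℝ) := by
            rw [hNR, ← hpow]; ring
        _ ≤ 1 * (U' : ℝ) := mul_le_mul_of_nonneg_right hδ (le_of_lt hU'Rpos)
        _ = (U' : ℝ) := one_mul _
    have hDk : |DD θ y k| ≤ (n : ℝ) / K := by
      have h8 : |(u k.succ : ℝ) * DD θ y k|
          ≤ (N : ℝ) * |LL θ u| + ((n : ℝ) - 1) * ((U' : ℝ) * (1 / K)) := by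
        rw [hksplit]
        refine le_trans (tri _ _) ?_
        rw [abs_mul]
        have := mul_le_mul_of_nonneg_right habs0 (abs_nonneg (LL θ u))
        linarith [h6]
      have h9 : (U' : ℝ) * |DD θ y k| ≤ (U' : ℝ) / K + ((n : ℝ) - 1) * ((U' : ℝ) * (1 / K)) := by
        have h8' : |(u k.succ : ℝ) * DD θ y k|
            ≤ (U' : ℝ) / K + ((n : ℝ) - 1) * ((U' : ℝ) * (1 / K)) :=
          le_trans h8 (by linarith [hNdelta])
        rw [abs_mul, hU'R] at h8'
        exact h8'
      rw [le_div_iff₀ hKpos]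
      have h10 : (U' : ℝ) * (|DD θ y k| * K) ≤ (U' : ℝ) * (n : ℝ) := by
        have hKne : (K : ℝ) ≠ 0 := ne_of_gt hKpos
        calc (U' : ℝ) * (|DD θ y k| * K) = ((U' : ℝ) * |DD θ y k|) * K := by ring
          _ ≤ ((U' : ℝ) / K + ((n : ℝ) - 1) * ((U' : ℝ) * (1 / K))) * K :=
              mul_le_mul_of_nonneg_right h9 (le_of_lt hKpos)
          _ = (U' : ℝ) * (n : ℝ) := by field_simp; ring
      exact le_of_mul_le_mul_left h10 hU'Rpos
    have hn1R : (1 : ℝ) ≤ (n : ℝ) := Nat.one_le_cast.mpr hn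
    have hDall : ∀ i : Fin n, |DD θ y i| ≤ (n : ℝ) / K := by
      intro i
      by_cases hi : i = k
      · rw [hi]; exact hDk
      · refine le_trans (hDsmall i hi) ?_
        gcongr
    -- maxAbs bound
    have hNR : (N : ℝ) = (K : ℝ) ^ (n - 1) * (U' : ℝ) := by rw [hN]; push_cast; ring
    have hNR1 : (1 : ℝ) ≤ (N : ℝ) := Nat.one_le_cast.mpr hN1
    have hthM := one_le_thM θ
    have hK1R : (1 : ℝ) ≤ (K : ℝ) := by exact_mod_cast hK
    have hnK : (n : ℝ) / K ≤ (n : ℝ) := by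
      rw [div_le_iff₀ hKpos]
      nlinarith [hn1R, hK1R]
    have hmz : |(y 0 : ℝ)| ≤ (thM θ + n) * (N : ℝ) := by
      refine le_trans habs0 ?_
      nlinarith [hNR1, hthM, hn1R]
    have hms : ∀ i : Fin n, |(y i.succ : ℝ)| ≤ (thM θ + n) * (N : ℝ) := by
      intro i
      have hyi : (y i.succ : ℝ) = (y 0 : ℝ) * θ i - DD θ y i := by
        rw [DD]; ring
      rw [hyi]
      refine le_trans (tri _ _) ?_
      rw [abs_mul]
      have h11 : |(y 0 : ℝ)| * |θ i| ≤ (N : ℝ) * (thM θ - 1) :=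
        mul_le_mul habs0 (abs_th_le θ i) (abs_nonneg _) (by linarith [hNR1])
      have h12 : |DD θ y i| ≤ (n : ℝ) := le_trans (hDall i) hnK
      have h13 : (n : ℝ) ≤ (N : ℝ) * n := by nlinarith [hNR1, hn1R]
      linarith
    have hmax : ∀ j, |(y j : ℝ)| ≤ (thM θ + n) * ((K : ℝ) ^ (n - 1) * (U' : ℝ)) := by
      intro j
      rw [← hNR]
      rcases Fin.eq_zero_or_eq_succ j with hj | ⟨i, hj⟩
      · rw [hj]; exact hmz
      · rw [hj]; exact hms i
    exact ⟨y, hy0pos, hDall, maxAbs_le_of_forall hmax⟩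
  rcases hne.lt_or_gt with h | h
  · exact H a0 b0 (Nat.lt_succ_iff.mp (Finset.mem_range.mp ha0))
      (Nat.lt_succ_iff.mp (Finset.mem_range.mp hb0)) h heqc
  · exact H b0 a0 (Nat.lt_succ_iff.mp (Finset.mem_range.mp hb0))
      (Nat.lt_succ_iff.mp (Finset.mem_range.mp ha0)) h heqc.symm

lemma exists_abs_eq_maxAbs (x : Fin (n + 1) → ℤ) : ∃ j, maxAbs x = |(x j : ℝ)| := by
  obtain ⟨j, _, hj⟩ := Finset.exists_mem_eq_sup (Finset.univ : Finset (Fin (n + 1)))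
    ⟨0, Finset.mem_univ 0⟩ (fun i => (x i).natAbs)
  exact ⟨j, by rw [maxAbs, hj]; exact cast_natAbs_real (x j)⟩

lemma maxAbs_zero : maxAbs (0 : Fin (n + 1) → ℤ) = 0 := by simp [maxAbs]

lemma rpow_neg_anti {x y e : ℝ} (hx : 0 < x) (hxy : x ≤ y) (he : 0 ≤ e) :
    y ^ (-e) ≤ x ^ (-e) := by
  rw [Real.rpow_neg (le_of_lt hx), Real.rpow_neg (by linarith)]
  exact inv_anti₀ (Real.rpow_pos_of_pos hx e) (Real.rpow_le_rpow (le_of_lt hx) hxy he)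

set_option maxHeartbeats 2000000 in
lemma Bmain (hn : 0 < n) {θ : Fin n → ℝ} (hθ : LinearIndependent ℚ (Fin.cons (1 : ℝ) θ))
    (ω0 : ℝ) (hω0 : 0 ≤ ω0) (hs : 0 < (n : ℝ) * ω0 + n - 1)
    (hS : {y : Fin (n + 1) → ℤ |
      ∀ i : Fin n, |(y 0 : ℝ) * θ i - (y i.succ : ℝ)| ≤ maxAbs y ^ (-ω0)}.Infinite)
    (ω' : ℝ) (hω' : ω' < (n : ℝ) * ω0 + n - 1) :
    {x : Fin (n + 1) → ℤ |
      |(x 0 : ℝ) + ∑ i : Fin n, (x i.succ : ℝ) * θ i| ≤ maxAbs x ^ (-ω')}.Infinite := by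
  classical
  set s : ℝ := (n : ℝ) * ω0 + n - 1 with hsdef
  have hn1R : (1 : ℝ) ≤ (n : ℝ) := Nat.one_le_cast.mpr hn
  have hnR : (0 : ℝ) < (n : ℝ) := by linarith
  have hθM1 : (1 : ℝ) ≤ thM θ := one_le_thM θ
  set C2 : ℝ := 2 * n ^ 2 * thM θ with hC2
  have hC2pos : 0 < C2 := by positivity
  set C : ℝ := 2 * n * thM θ * (n : ℝ) ^ ((n : ℝ) * (1 + ω0)) with hC
  have hCpos : 0 < C := by positivity
  set c3 : ℝ := max 1 (C ^ (1 / (s - ω'))) with hc3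
  have hc31 : (1 : ℝ) ≤ c3 := le_max_left _ _
  -- the chooser
  set F : (Fin (n + 1) → ℤ) → (Fin (n + 1) → ℤ) := fun y =>
    if h : y ≠ 0 then Classical.choose (Bcore hn y h) else 0 with hF
  have hFspec : ∀ y : Fin (n + 1) → ℤ, y ≠ 0 → F y ≠ 0 ∧ (∑ j, F y j * y j) = 0 ∧
      maxAbs (F y) ≤ (n : ℝ) * (maxAbs y) ^ ((n : ℝ)⁻¹) := by
    intro y h
    rw [hF]
    simp only [dif_pos h]
    exact Classical.choose_spec (Bcore hn y h)
  -- per-y estimates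
  have step : ∀ y ∈ {y : Fin (n + 1) → ℤ |
      ∀ i : Fin n, |(y 0 : ℝ) * θ i - (y i.succ : ℝ)| ≤ maxAbs y ^ (-ω0)},
      2 < maxAbs y →
      F y ≠ 0 ∧ |LL θ (F y)| ≤ C2 * (maxAbs y) ^ (-(s / n)) ∧
        maxAbs (F y) ≤ (n : ℝ) * (maxAbs y) ^ ((n : ℝ)⁻¹) ∧
        |LL θ (F y)| ≤ C * (maxAbs (F y)) ^ (-s) := by
    intro y hymem hY2
    set Y := maxAbs y with hYdef
    have hYpos : (0 : ℝ) < Y := by linarith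
    have hy0 : y ≠ 0 := by
      intro h
      have h2' : (2 : ℝ) < maxAbs y := hY2
      rw [h, maxAbs_zero] at h2'
      linarith
    obtain ⟨hFne, hFdot, hFmax⟩ := hFspec y hy0
    set u := F y with hu
    set Mu := maxAbs u with hMu
    have hMu1 : (1 : ℝ) ≤ Mu := one_le_maxAbs hFne
    have hMupos : (0 : ℝ) < Mu := by linarith
    have hDy : ∀ i : Fin n, |DD θ y i| ≤ Y ^ (-ω0) := fun i => hymem i
    have hε1 : Y ^ (-ω0) ≤ 1 :=
      Real.rpow_le_one_of_one_le_of_nonpos (by linarith) (by linarith)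
    -- |y 0| is comparable to Y
    have hYb : Y ≤ |(y 0 : ℝ)| * thM θ + 1 := by
      show maxAbs y ≤ |(y 0 : ℝ)| * thM θ + 1
      obtain ⟨j, hj⟩ := exists_abs_eq_maxAbs y
      rw [hj]
      rcases Fin.eq_zero_or_eq_succ j with hj0 | ⟨i, hji⟩
      · rw [hj0]
        nlinarith [abs_nonneg ((y 0 : ℝ))]
      · rw [hji]
        have h1 : (y i.succ : ℝ) = (y 0 : ℝ) * θ i - DD θ y i := by rw [DD]; ring
        rw [h1]
        have h2 : |(y 0 : ℝ) * θ i - DD θ y i| ≤ |(y 0 : ℝ) * θ i| + |DD θ y i| := by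
          rw [sub_eq_add_neg]
          exact le_trans (abs_add_le _ _) (by rw [abs_neg])
        rw [abs_mul] at h2
        have h3 := abs_th_le θ i
        have h4 := le_trans (hDy i) hε1
        nlinarith [abs_nonneg ((y 0 : ℝ))]
    have hy0ne : (y 0 : ℝ) ≠ 0 := by
      intro h
      rw [h] at hYb
      simp at hYb
      linarith
    have hy0one : (1 : ℝ) ≤ |(y 0 : ℝ)| := by
      have : y 0 ≠ 0 := fun h => hy0ne (by rw [h]; norm_num)
      have h1 : (1 : ℤ) ≤ |y 0| := Int.one_le_abs this
      calc (1 : ℝ) ≤ ((|y 0| : ℤ) : ℝ) := by exact_mod_cast h1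
        _ = |(y 0 : ℝ)| := by push_cast; ring
    have h2θ : Y ≤ 2 * thM θ * |(y 0 : ℝ)| := by nlinarith
    -- the fundamental bound |L u| * |y0| ≤ n Mu Y^{-ω0}
    have hid := key_identity θ u y
    have hdotR : ∑ j : Fin (n + 1), (u j : ℝ) * (y j : ℝ) = 0 := by
      have h0 : ((∑ j : Fin (n + 1), u j * y j : ℤ) : ℝ) = 0 := by rw [hFdot]; norm_num
      push_cast at h0
      exact h0
    rw [hdotR, sub_zero] at hid
    have hy0L : |(y 0 : ℝ)| * |LL θ u| ≤ (n : ℝ) * (Mu * Y ^ (-ω0)) := by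
      rw [← abs_mul, ← hid]
      calc |∑ i : Fin n, (u i.succ : ℝ) * DD θ y i|
          ≤ ∑ i : Fin n, |(u i.succ : ℝ) * DD θ y i| := Finset.abs_sum_le_sum_abs _ _
        _ ≤ ∑ _i : Fin n, Mu * Y ^ (-ω0) := by
            refine Finset.sum_le_sum fun i _ => ?_
            rw [abs_mul]
            exact mul_le_mul (abs_coe_le_maxAbs u i.succ) (hDy i) (abs_nonneg _)
              (le_of_lt hMupos)
        _ = (n : ℝ) * (Mu * Y ^ (-ω0)) := by
            rw [Finset.sum_const, Finset.card_univ, Fintype.card_fin, nsmul_eq_mul]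
    -- main bound |L u| ≤ 2 n thM Mu Y^{-(1+ω0)}
    have hmain : |LL θ u| ≤ 2 * n * thM θ * Mu * Y ^ (-(1 + ω0)) := by
      have hYr : Y ^ (-(1 + ω0)) * Y = Y ^ (-ω0) := by
        rw [show -(1 + ω0) = -ω0 + (-1) by ring, Real.rpow_add hYpos, Real.rpow_neg_one]
        field_simp
      have h1 : |LL θ u| * Y ≤ 2 * n * thM θ * Mu * Y ^ (-ω0) := by
        calc |LL θ u| * Y ≤ |LL θ u| * (2 * thM θ * |(y 0 : ℝ)|) :=
              mul_le_mul_of_nonneg_left h2θ (abs_nonneg _)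
          _ = 2 * thM θ * (|(y 0 : ℝ)| * |LL θ u|) := by ring
          _ ≤ 2 * thM θ * ((n : ℝ) * (Mu * Y ^ (-ω0))) := by
              have h2 : (0 : ℝ) ≤ 2 * thM θ := by linarith
              exact mul_le_mul_of_nonneg_left hy0L h2
          _ = 2 * n * thM θ * Mu * Y ^ (-ω0) := by ring
      have h3 : |LL θ u| * Y ≤ (2 * n * thM θ * Mu * Y ^ (-(1 + ω0))) * Y := by
        rw [mul_assoc (2 * (n:ℝ) * thM θ * Mu), hYr]
        exact h1
      exact le_of_mul_le_mul_right h3 hYpos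
    refine ⟨hFne, ?_, hFmax, ?_⟩
    · -- |L u| ≤ C2 Y^{-s/n}
      have h1 : Mu ≤ (n : ℝ) * Y ^ ((n : ℝ)⁻¹) := hFmax
      have h2 : |LL θ u| ≤ 2 * n * thM θ * ((n : ℝ) * Y ^ ((n : ℝ)⁻¹)) * Y ^ (-(1 + ω0)) := by
        refine le_trans hmain ?_
        have h3 : (0 : ℝ) ≤ Y ^ (-(1 + ω0)) := Real.rpow_nonneg (le_of_lt hYpos) _
        nlinarith [mul_le_mul_of_nonneg_right h1 h3, hθM1, hn1R]
      have h4 : Y ^ ((n : ℝ)⁻¹) * Y ^ (-(1 + ω0)) = Y ^ (-(s / n)) := by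
        rw [← Real.rpow_add hYpos]
        congr 1
        rw [hsdef]
        field_simp
        ring
      calc |LL θ u| ≤ 2 * n * thM θ * ((n : ℝ) * Y ^ ((n : ℝ)⁻¹)) * Y ^ (-(1 + ω0)) := h2
        _ = 2 * n ^ 2 * thM θ * (Y ^ ((n : ℝ)⁻¹) * Y ^ (-(1 + ω0))) := by ring
        _ = C2 * Y ^ (-(s / n)) := by rw [h4, hC2]
    · -- |L u| ≤ C Mu^{-s}
      have h1 : (Mu / n) ^ ((n : ℝ) : ℝ) ≤ Y := by
        have h2 : Mu / n ≤ Y ^ ((n : ℝ)⁻¹) := by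
          rw [div_le_iff₀ hnR]
          calc Mu ≤ (n : ℝ) * Y ^ ((n : ℝ)⁻¹) := hFmax
            _ = Y ^ ((n : ℝ)⁻¹) * n := by ring
        calc (Mu / n) ^ ((n : ℝ) : ℝ) ≤ (Y ^ ((n : ℝ)⁻¹)) ^ ((n : ℝ) : ℝ) :=
              Real.rpow_le_rpow (by positivity) h2 (by positivity)
          _ = Y := by
              rw [← Real.rpow_mul (le_of_lt hYpos)]
              rw [inv_mul_cancel₀ (ne_of_gt hnR), Real.rpow_one]
      have hMn : (0 : ℝ) < Mu / n := by positivity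
      have h3 : Y ^ (-(1 + ω0)) ≤ ((Mu / n) ^ ((n : ℝ) : ℝ)) ^ (-(1 + ω0)) := by
        have := rpow_neg_anti (Real.rpow_pos_of_pos hMn _) h1 (by linarith : (0:ℝ) ≤ 1 + ω0)
        exact this
      have h4 : ((Mu / n) ^ ((n : ℝ) : ℝ)) ^ (-(1 + ω0)) = (Mu / n) ^ (-((n : ℝ) * (1 + ω0))) := by
        rw [← Real.rpow_mul (le_of_lt hMn)]
        congr 1
        ring
      have h5 : (Mu / n) ^ (-((n : ℝ) * (1 + ω0)))
          = Mu ^ (-((n : ℝ) * (1 + ω0))) * (n : ℝ) ^ ((n : ℝ) * (1 + ω0)) := by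
        rw [div_eq_mul_inv, Real.mul_rpow (le_of_lt hMupos) (by positivity)]
        rw [Real.inv_rpow (le_of_lt hnR), ← Real.rpow_neg (le_of_lt hnR), neg_neg]
      have h6 : |LL θ u| ≤ 2 * n * thM θ * Mu *
          (Mu ^ (-((n : ℝ) * (1 + ω0))) * (n : ℝ) ^ ((n : ℝ) * (1 + ω0))) := by
        refine le_trans hmain ?_
        rw [← h5, ← h4]
        have h7 : (0 : ℝ) ≤ 2 * n * thM θ * Mu := by positivity
        exact mul_le_mul_of_nonneg_left (h4 ▸ h3) h7
      have h8 : Mu * Mu ^ (-((n : ℝ) * (1 + ω0))) = Mu ^ (-s) := by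
        nth_rewrite 1 [← Real.rpow_one Mu]
        rw [← Real.rpow_add hMupos]
        congr 1
        rw [hsdef]
        ring
      calc |LL θ u| ≤ 2 * n * thM θ * Mu *
            (Mu ^ (-((n : ℝ) * (1 + ω0))) * (n : ℝ) ^ ((n : ℝ) * (1 + ω0))) := h6
        _ = (2 * n * thM θ * (n : ℝ) ^ ((n : ℝ) * (1 + ω0))) *
            (Mu * Mu ^ (-((n : ℝ) * (1 + ω0)))) := by ring
        _ = C * Mu ^ (-s) := by rw [h8, hC]
  -- now the contradiction argument
  intro htf
  have hS' : ({y ∈ {y : Fin (n + 1) → ℤ |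
      ∀ i : Fin n, |(y 0 : ℝ) * θ i - (y i.succ : ℝ)| ≤ maxAbs y ^ (-ω0)} |
        2 < maxAbs y} : Set (Fin (n + 1) → ℤ)).Infinite := by
    have h1 := hS.diff (finite_maxAbs_le 2)
    refine h1.mono ?_
    intro y hy
    exact ⟨hy.1, lt_of_not_ge hy.2⟩
  set Sgood := {y ∈ {y : Fin (n + 1) → ℤ |
      ∀ i : Fin n, |(y 0 : ℝ) * θ i - (y i.succ : ℝ)| ≤ maxAbs y ^ (-ω0)} |
        2 < maxAbs y} with hSgood
  set T' : Set (Fin (n + 1) → ℤ) := {x : Fin (n + 1) → ℤ |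
      |(x 0 : ℝ) + ∑ i : Fin n, (x i.succ : ℝ) * θ i| ≤ maxAbs x ^ (-ω')}
      ∪ {u | maxAbs u ≤ c3} with hT'
  have hT'fin : T'.Finite := htf.union (finite_maxAbs_le c3)
  have himg : ∀ y ∈ Sgood, F y ∈ T' := by
    intro y hy
    obtain ⟨hFne, hC2b, hFmax, hCb⟩ := step y hy.1 hy.2
    set Mu := maxAbs (F y) with hMu
    have hMu1 : (1 : ℝ) ≤ Mu := one_le_maxAbs hFne
    rcases le_total Mu c3 with hcase | hcase
    · exact Or.inr hcase
    · left
      show |((F y) 0 : ℝ) + ∑ i : Fin n, ((F y) i.succ : ℝ) * θ i| ≤ Mu ^ (-ω')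
      have hLu : LL θ (F y) = ((F y) 0 : ℝ) + ∑ i : Fin n, ((F y) i.succ : ℝ) * θ i := rfl
      rw [← hLu]
      refine le_trans hCb ?_
      -- C * Mu^{-s} ≤ Mu^{-ω'}
      have hMupos : (0 : ℝ) < Mu := by linarith
      have hsplit : Mu ^ (-s) = Mu ^ (-ω') * Mu ^ (ω' - s) := by
        rw [← Real.rpow_add hMupos]; congr 1; ring
      rw [hsplit]
      have hgoal : C * Mu ^ (ω' - s) ≤ 1 := by
        have h1 : C ≤ Mu ^ (s - ω') := by
          have h2 : c3 ^ (s - ω') ≤ Mu ^ (s - ω') :=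
            Real.rpow_le_rpow (by linarith : (0:ℝ) ≤ c3) hcase (by linarith)
          have h3 : C ^ (1 / (s - ω')) ≤ c3 := le_max_right _ _
          have h4 : (C ^ (1 / (s - ω'))) ^ (s - ω') ≤ c3 ^ (s - ω') :=
            Real.rpow_le_rpow (by positivity) h3 (by linarith)
          have h5 : (C ^ (1 / (s - ω'))) ^ (s - ω') = C := by
            rw [← Real.rpow_mul (le_of_lt hCpos)]
            rw [one_div, inv_mul_cancel₀ (by linarith : s - ω' ≠ 0), Real.rpow_one]
          linarith [h5 ▸ h4, h2]
        have h6 : Mu ^ (ω' - s) = (Mu ^ (s - ω'))⁻¹ := by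
          rw [← Real.rpow_neg (le_of_lt hMupos)]; congr 1; ring
        rw [h6]
        rw [mul_inv_le_iff₀ (Real.rpow_pos_of_pos hMupos _)]
        linarith
      calc C * (Mu ^ (-ω') * Mu ^ (ω' - s)) = (C * Mu ^ (ω' - s)) * Mu ^ (-ω') := by ring
        _ ≤ 1 * Mu ^ (-ω') :=
            mul_le_mul_of_nonneg_right hgoal (Real.rpow_nonneg (le_of_lt hMupos) _)
        _ = Mu ^ (-ω') := one_mul _
  -- some fiber is infinite
  obtain ⟨ustar, hustar, hfib⟩ : ∃ u ∈ T', {y ∈ Sgood | F y = u}.Infinite := by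
    by_contra hall
    push_neg at hall
    have hsub : Sgood ⊆ ⋃ u ∈ T', {y ∈ Sgood | F y = u} := by
      intro y hy
      exact Set.mem_biUnion (himg y hy) ⟨hy, rfl⟩
    exact hS' ((hT'fin.biUnion (fun u hu => hall u hu)).subset hsub)
  obtain ⟨y1, hy1good, hy1F⟩ := hfib.nonempty
  have hustar_ne : ustar ≠ 0 := by
    rw [← hy1F]
    exact (step y1 hy1good.1 hy1good.2).1
  have hLpos : 0 < |LL θ ustar| := abs_pos.mpr (LL_ne_zero hθ hustar_ne)
  set B : ℝ := max 2 ((C2 / |LL θ ustar|) ^ ((n : ℝ) / s)) with hB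
  obtain ⟨y2, hy2mem, hy2big⟩ := exists_gt_maxAbs_of_infinite hfib B
  obtain ⟨hy2good, hy2F⟩ := hy2mem
  have hbound := (step y2 hy2good.1 hy2good.2).2.1
  rw [hy2F] at hbound
  set Y := maxAbs y2 with hY
  have hYpos : (0 : ℝ) < Y := by
    have : (2 : ℝ) ≤ B := le_max_left _ _
    linarith
  have hsn : (0 : ℝ) < s / n := by positivity
  have hr1 : C2 / |LL θ ustar| < Y ^ (s / n) := by
    have h1 : (C2 / |LL θ ustar|) ^ ((n : ℝ) / s) ≤ B := le_max_right _ _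
    have h2 : B ^ (s / n) < Y ^ (s / n) :=
      Real.rpow_lt_rpow (by positivity : (0:ℝ) ≤ B) hy2big hsn
    have h3 : ((C2 / |LL θ ustar|) ^ ((n : ℝ) / s)) ^ (s / n) ≤ B ^ (s / n) :=
      Real.rpow_le_rpow (by positivity) h1 (le_of_lt hsn)
    have h4 : ((C2 / |LL θ ustar|) ^ ((n : ℝ) / s)) ^ (s / n) = C2 / |LL θ ustar| := by
      rw [← Real.rpow_mul (by positivity)]
      rw [show (n : ℝ) / s * (s / n) = 1 by field_simp, Real.rpow_one]
    linarith [h4 ▸ h3]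
  have hr2 : |LL θ ustar| * Y ^ (s / n) ≤ C2 := by
    have h1 : Y ^ (-(s / n)) = (Y ^ (s / n))⁻¹ := Real.rpow_neg (le_of_lt hYpos) _
    have h2 : (0 : ℝ) < Y ^ (s / n) := Real.rpow_pos_of_pos hYpos _
    calc |LL θ ustar| * Y ^ (s / n) ≤ (C2 * Y ^ (-(s / n))) * Y ^ (s / n) :=
          mul_le_mul_of_nonneg_right hbound (le_of_lt h2)
      _ = C2 := by rw [h1]; field_simp
  have hr3 : C2 < |LL θ ustar| * Y ^ (s / n) := by
    have := mul_lt_mul_of_pos_left hr1 hLpos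
    calc C2 = |LL θ ustar| * (C2 / |LL θ ustar|) := by field_simp
      _ < |LL θ ustar| * Y ^ (s / n) := this
  linarith

set_option maxHeartbeats 4000000 in
lemma Amain (hn : 0 < n) {θ : Fin n → ℝ} (hθ : LinearIndependent ℚ (Fin.cons (1 : ℝ) θ))
    (ω ω1 : ℝ) (h0 : 0 < ω) (h1 : ω < ω1)
    (hS : {x : Fin (n + 1) → ℤ |
      |(x 0 : ℝ) + ∑ i : Fin n, (x i.succ : ℝ) * θ i| ≤ maxAbs x ^ (-ω1)}.Infinite) :
    {x : Fin (n + 1) → ℤ | ∀ i : Fin n,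
      |(x 0 : ℝ) * θ i - (x i.succ : ℝ)| ≤
        maxAbs x ^ (-(ω / (((n : ℝ) - 1) * ω + (n : ℝ))))}.Infinite := by
  classical
  have hn1R : (1 : ℝ) ≤ (n : ℝ) := Nat.one_le_cast.mpr hn
  have hnR : (0 : ℝ) < (n : ℝ) := by linarith
  have hθM1 : (1 : ℝ) ≤ thM θ := one_le_thM θ
  have hω1pos : 0 < ω1 := lt_trans h0 h1
  set den : ℝ := ((n : ℝ) - 1) * ω + (n : ℝ) with hden_def
  have hden : 0 < den := by nlinarith
  set p : ℝ := 1 / den with hp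
  have hppos : 0 < p := by positivity
  set ws : ℝ := ω / den with hws
  have hwspos : 0 < ws := by positivity
  have hws_p : ws = ω * p := by rw [hws, hp]; ring
  set qq : ℝ := p * (ω1 - ω) with hqq
  have hqqpos : 0 < qq := by
    rw [hqq]
    have : 0 < ω1 - ω := by linarith
    positivity
  set cA : ℝ := thM θ + n with hcA
  have hcApos : 0 < cA := by linarith
  set C6 : ℝ := 2 * (n : ℝ) * cA ^ ws with hC6
  have hC6pos : 0 < C6 := by positivity
  set U0 : ℝ := 2 + (2 : ℝ) ^ ((n : ℝ) / ω1) + (max 1 C6) ^ (1 / qq) with hU0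
  have hU0two : (2 : ℝ) ≤ U0 := by
    rw [hU0]
    have h2 : (0:ℝ) < (2 : ℝ) ^ ((n : ℝ) / ω1) := Real.rpow_pos_of_pos (by norm_num) _
    have h3 : (0:ℝ) < (max 1 C6) ^ (1 / qq) :=
      Real.rpow_pos_of_pos (lt_of_lt_of_le one_pos (le_max_left _ _)) _
    linarith
  -- the key exponent identity
  have hexp : (n : ℝ)⁻¹ - ws * (((n : ℝ) - 1) * (n : ℝ)⁻¹) = p := by
    rw [hws, hp]
    field_simp
    ring
  -- step : from each large solution u produce a good y
  have hstep : ∀ u : Fin (n + 1) → ℤ,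
      |(u 0 : ℝ) + ∑ i : Fin n, (u i.succ : ℝ) * θ i| ≤ maxAbs u ^ (-ω1) →
      U0 < maxAbs u →
      ∃ y : Fin (n + 1) → ℤ, 1 ≤ y 0 ∧
        (∀ i : Fin n, |(y 0 : ℝ) * θ i - (y i.succ : ℝ)| ≤ maxAbs y ^ (-ws)) ∧
        (∀ i : Fin n, |DD θ y i| ≤ 2 * (n : ℝ) * (maxAbs u) ^ (-(ω1 / n))) := by
    intro u humem hubig
    set U : ℝ := maxAbs u with hU
    have hU2 : (2 : ℝ) < U := lt_of_le_of_lt hU0two hubig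
    have hUpos : (0 : ℝ) < U := by linarith
    have hu0 : u ≠ 0 := by
      intro h
      have h2' : (2 : ℝ) < maxAbs u := hU2
      rw [h, maxAbs_zero] at h2'
      linarith
    set δ : ℝ := |LL θ u| with hδdef
    have hδpos : 0 < δ := abs_pos.mpr (LL_ne_zero hθ hu0)
    have hδle : δ ≤ U ^ (-ω1) := humem
    have hδlt1 : δ < 1 := by
      refine lt_of_le_of_lt hδle ?_
      exact Real.rpow_lt_one_of_one_lt_of_neg (by linarith) (by linarith)
    -- δ ≤ 2^{-n}
    have hU2n : (2 : ℝ) ^ ((n : ℝ) / ω1) ≤ U := by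
      rw [hU0] at hubig
      have h2 : (0:ℝ) < (max 1 C6) ^ (1 / qq) :=
        Real.rpow_pos_of_pos (lt_of_lt_of_le one_pos (le_max_left _ _)) _
      linarith
    have hUω1 : (2 : ℝ) ^ (n : ℝ) ≤ U ^ ω1 := by
      calc (2 : ℝ) ^ (n : ℝ) = ((2 : ℝ) ^ ((n : ℝ) / ω1)) ^ ω1 := by
            rw [← Real.rpow_mul (by norm_num), div_mul_cancel₀ _ (ne_of_gt hω1pos)]
        _ ≤ U ^ ω1 := Real.rpow_le_rpow (by positivity) hU2n (le_of_lt hω1pos)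
    have hδ2n : δ ≤ ((2 : ℝ) ^ (n : ℝ))⁻¹ := by
      refine le_trans hδle ?_
      rw [Real.rpow_neg (le_of_lt hUpos)]
      exact inv_anti₀ (Real.rpow_pos_of_pos (by norm_num) _) hUω1
    have hdinv : (2 : ℝ) ^ (n : ℝ) ≤ δ⁻¹ := by
      have := inv_anti₀ hδpos hδ2n
      rwa [inv_inv] at this
    set v : ℝ := (δ⁻¹) ^ ((n : ℝ)⁻¹) with hv
    have hv2 : (2 : ℝ) ≤ v := by
      calc (2 : ℝ) = ((2 : ℝ) ^ (n : ℝ)) ^ ((n : ℝ)⁻¹) := by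
            rw [← Real.rpow_mul (by norm_num), mul_inv_cancel₀ (ne_of_gt hnR),
              Real.rpow_one]
        _ ≤ (δ⁻¹) ^ ((n : ℝ)⁻¹) := Real.rpow_le_rpow (by positivity) hdinv (by positivity)
    have hvpos : 0 < v := by linarith
    set K : ℕ := ⌊v⌋₊ with hKdef
    have hK1 : 1 ≤ K := Nat.le_floor (by exact_mod_cast (by linarith : (1:ℝ) ≤ v))
    have hKpos : (0 : ℝ) < (K : ℝ) := by exact_mod_cast hK1
    have hKle : (K : ℝ) ≤ v := Nat.floor_le (le_of_lt hvpos)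
    have hKhalf : v ≤ 2 * K := by
      have h2 : v < (K : ℝ) + 1 := by
        have := Nat.lt_succ_floor v
        push_cast at this
        linarith
      linarith [hKle, hv2]
    -- K^n δ ≤ 1
    have hvn : v ^ (n : ℕ) = δ⁻¹ := Real.rpow_inv_natCast_pow (by positivity) hn.ne'
    have hδK : (K : ℝ) ^ n * δ ≤ 1 := by
      have h2 : (K : ℝ) ^ (n : ℕ) ≤ δ⁻¹ := by
        rw [← hvn]
        exact pow_le_pow_left₀ (le_of_lt hKpos) hKle n
      calc (K : ℝ) ^ n * δ ≤ δ⁻¹ * δ := mul_le_mul_of_nonneg_right h2 (le_of_lt hδpos)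
        _ = 1 := inv_mul_cancel₀ (ne_of_gt hδpos)
    -- U' ≥ 1
    have hU'1 : 1 ≤ Finset.univ.sup (fun i : Fin n => (u i.succ).natAbs) := by
      by_contra hc
      push_neg at hc
      have hall : ∀ i : Fin n, u i.succ = 0 := by
        intro i
        have h2 : (u i.succ).natAbs ≤ Finset.univ.sup (fun i : Fin n => (u i.succ).natAbs) :=
          Finset.le_sup (f := fun i : Fin n => (u i.succ).natAbs) (Finset.mem_univ i)
        omega
      have hLu : LL θ u = (u 0 : ℝ) := by
        rw [LL]
        rw [Finset.sum_eq_zero fun i _ => by rw [hall i]; norm_num]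
        ring
      have hu00 : u 0 ≠ 0 := by
        intro h
        refine hu0 (funext fun j => ?_)
        rcases Fin.eq_zero_or_eq_succ j with hj | ⟨i, hj⟩
        · rw [hj]; exact h
        · rw [hj]; exact hall i
      have h3 : (1 : ℝ) ≤ δ := by
        rw [hδdef, hLu]
        have h4 : (1 : ℤ) ≤ |u 0| := Int.one_le_abs hu00
        calc (1 : ℝ) ≤ ((|u 0| : ℤ) : ℝ) := by exact_mod_cast h4
          _ = |(u 0 : ℝ)| := by push_cast; ring
      linarith
    -- apply Acore
    obtain ⟨y, hy0pos, hDb, hym⟩ := Acore hn θ u K hK1 hU'1 hδK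
    set U'R : ℝ := ((Finset.univ.sup (fun i : Fin n => (u i.succ).natAbs) : ℕ) : ℝ) with hU'R
    have hU'Rpos : (0 : ℝ) < U'R := by rw [hU'R]; exact_mod_cast hU'1
    have hU'leU : U'R ≤ U := by
      rw [hU'R, hU]
      have h2 : Finset.univ.sup (fun i : Fin n => (u i.succ).natAbs)
          ≤ Finset.univ.sup (fun j : Fin (n + 1) => (u j).natAbs) := by
        refine Finset.sup_le fun i _ => ?_
        exact Finset.le_sup (f := fun j : Fin (n + 1) => (u j).natAbs) (Finset.mem_univ i.succ)
      have h3 : maxAbs u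
          = ((Finset.univ.sup (fun j : Fin (n + 1) => (u j).natAbs) : ℕ) : ℝ) := rfl
      rw [h3]
      exact_mod_cast h2
    -- error bound : n/K ≤ E := 2 n δ^{1/n}
    have hinvv : v⁻¹ = δ ^ ((n : ℝ)⁻¹) := by
      rw [hv, Real.inv_rpow (le_of_lt hδpos), inv_inv]
    have hEK : (n : ℝ) / K ≤ 2 * (n : ℝ) * δ ^ ((n : ℝ)⁻¹) := by
      rw [div_le_iff₀ hKpos]
      have h2 : (1 : ℝ) ≤ 2 * δ ^ ((n : ℝ)⁻¹) * K := by
        have h3 : v * v⁻¹ = 1 := mul_inv_cancel₀ (ne_of_gt hvpos)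
        have h4 : v * v⁻¹ ≤ (2 * K) * v⁻¹ :=
          mul_le_mul_of_nonneg_right hKhalf (le_of_lt (inv_pos.mpr hvpos))
        rw [h3, hinvv] at h4
        calc (1 : ℝ) ≤ 2 * K * δ ^ ((n : ℝ)⁻¹) := by rw [mul_comm (2 * (K:ℝ))] at h4; linarith [h4]
          _ = 2 * δ ^ ((n : ℝ)⁻¹) * K := by ring
      calc (n : ℝ) = (n : ℝ) * 1 := by ring
        _ ≤ (n : ℝ) * (2 * δ ^ ((n : ℝ)⁻¹) * K) := by
            exact mul_le_mul_of_nonneg_left h2 (le_of_lt hnR)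
        _ = 2 * (n : ℝ) * δ ^ ((n : ℝ)⁻¹) * K := by ring
    set E : ℝ := 2 * (n : ℝ) * δ ^ ((n : ℝ)⁻¹) with hE
    have hEpos : 0 < E := by
      rw [hE]; positivity
    -- maxAbs y ≤ A
    set A : ℝ := cA * ((δ⁻¹) ^ (((n : ℝ) - 1) * (n : ℝ)⁻¹) * U) with hA
    have hApos : 0 < A := by
      rw [hA]
      have := Real.rpow_pos_of_pos (inv_pos.mpr hδpos) (((n : ℝ) - 1) * (n : ℝ)⁻¹)
      positivity
    have hMyA : maxAbs y ≤ A := by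
      refine le_trans hym ?_
      rw [hA]
      refine mul_le_mul_of_nonneg_left ?_ (le_of_lt hcApos)
      have h2 : (K : ℝ) ^ (n - 1 : ℕ) ≤ (δ⁻¹) ^ (((n : ℝ) - 1) * (n : ℝ)⁻¹) := by
        calc (K : ℝ) ^ (n - 1 : ℕ) ≤ v ^ (n - 1 : ℕ) :=
              pow_le_pow_left₀ (le_of_lt hKpos) hKle _
          _ = ((δ⁻¹) ^ ((n : ℝ)⁻¹)) ^ ((n - 1 : ℕ) : ℝ) := by
              rw [Real.rpow_natCast]
          _ = (δ⁻¹) ^ (((n : ℝ) - 1) * (n : ℝ)⁻¹) := by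
              rw [← Real.rpow_mul (by positivity)]
              congr 1
              rw [Nat.cast_sub hn]
              push_cast
              ring
      exact mul_le_mul h2 hU'leU (le_of_lt hU'Rpos)
        (Real.rpow_nonneg (le_of_lt (inv_pos.mpr hδpos)) _)
    -- E * A^{ws} ≤ 1
    have hAws : A ^ ws = cA ^ ws * ((δ⁻¹) ^ (((n : ℝ) - 1) * (n : ℝ)⁻¹)) ^ ws * U ^ ws := by
      rw [hA, Real.mul_rpow (le_of_lt hcApos) (by positivity),
        Real.mul_rpow (by positivity) (le_of_lt hUpos)]
      ring
    have hδe : δ ^ ((n : ℝ)⁻¹) * ((δ⁻¹) ^ (((n : ℝ) - 1) * (n : ℝ)⁻¹)) ^ ws = δ ^ p := by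
      rw [← Real.rpow_mul (by positivity : (0 : ℝ) ≤ δ⁻¹)]
      rw [Real.inv_rpow (le_of_lt hδpos)]
      rw [← Real.rpow_neg (le_of_lt hδpos)]
      rw [← Real.rpow_add hδpos]
      rw [show (n : ℝ)⁻¹ + -(((n : ℝ) - 1) * (n : ℝ)⁻¹ * ws)
          = (n : ℝ)⁻¹ - ws * (((n : ℝ) - 1) * (n : ℝ)⁻¹) by ring, hexp]
    have hEA1 : E * A ^ ws = C6 * (δ ^ p * U ^ ws) := by
      rw [hAws, hE, hC6, ← hδe]
      ring
    have hδp : δ ^ p ≤ U ^ (-(ω1 * p)) := by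
      calc δ ^ p ≤ (U ^ (-ω1)) ^ p :=
            Real.rpow_le_rpow (le_of_lt hδpos) hδle (le_of_lt hppos)
        _ = U ^ (-(ω1 * p)) := by
            rw [← Real.rpow_mul (le_of_lt hUpos)]
            congr 1
            ring
    have hUcomb : U ^ (-(ω1 * p)) * U ^ ws = U ^ (-qq) := by
      rw [← Real.rpow_add hUpos]
      congr 1
      rw [hqq, hws_p]
      ring
    have hC6U : C6 * U ^ (-qq) ≤ 1 := by
      have hU0c : (max 1 C6) ^ (1 / qq) ≤ U := by
        rw [hU0] at hubig
        have h2 : (0 : ℝ) < (2 : ℝ) ^ ((n : ℝ) / ω1) := Real.rpow_pos_of_pos (by norm_num) _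
        linarith
      have h2 : max 1 C6 ≤ U ^ qq := by
        calc max 1 C6 = ((max 1 C6) ^ (1 / qq)) ^ qq := by
              rw [← Real.rpow_mul (by positivity), one_div,
                inv_mul_cancel₀ (ne_of_gt hqqpos), Real.rpow_one]
          _ ≤ U ^ qq := Real.rpow_le_rpow (by positivity) hU0c (le_of_lt hqqpos)
      have h3 : C6 ≤ U ^ qq := le_trans (le_max_right 1 C6) h2
      rw [Real.rpow_neg (le_of_lt hUpos)]
      rw [mul_inv_le_iff₀ (Real.rpow_pos_of_pos hUpos qq)]
      linarith
    have hEA : E * A ^ ws ≤ 1 := by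
      rw [hEA1]
      calc C6 * (δ ^ p * U ^ ws) ≤ C6 * (U ^ (-(ω1 * p)) * U ^ ws) := by
            refine mul_le_mul_of_nonneg_left ?_ (le_of_lt hC6pos)
            exact mul_le_mul_of_nonneg_right hδp (Real.rpow_nonneg (le_of_lt hUpos) _)
        _ = C6 * U ^ (-qq) := by rw [hUcomb]
        _ ≤ 1 := hC6U
    have hyne : y ≠ 0 := by
      intro h
      rw [h] at hy0pos
      simp at hy0pos
    have hy1 : (1 : ℝ) ≤ maxAbs y := one_le_maxAbs hyne
    have hfinal : ∀ i : Fin n, |(y 0 : ℝ) * θ i - (y i.succ : ℝ)| ≤ maxAbs y ^ (-ws) := by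
      intro i
      show |DD θ y i| ≤ maxAbs y ^ (-ws)
      refine le_trans (hDb i) (le_trans hEK ?_)
      have h3 : E ≤ A ^ (-ws) := by
        rw [Real.rpow_neg (le_of_lt hApos), ← one_div,
          le_div_iff₀ (Real.rpow_pos_of_pos hApos ws)]
        exact hEA
      exact le_trans h3 (rpow_neg_anti (by linarith) hMyA (le_of_lt hwspos))
    have hE2 : ∀ i : Fin n, |DD θ y i| ≤ 2 * (n : ℝ) * U ^ (-(ω1 / n)) := by
      intro i
      refine le_trans (le_trans (hDb i) hEK) ?_
      refine mul_le_mul_of_nonneg_left ?_ (by positivity : (0 : ℝ) ≤ 2 * (n : ℝ))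
      have hcv : (U ^ (-ω1)) ^ ((n : ℝ)⁻¹) = U ^ (-(ω1 / n)) := by
        rw [← Real.rpow_mul (le_of_lt hUpos)]
        congr 1
        rw [div_eq_mul_inv]
        ring
      rw [← hcv]
      exact Real.rpow_le_rpow (le_of_lt hδpos) hδle (by positivity)
    exact ⟨y, hy0pos, hfinal, hE2⟩
  -- contradiction argument
  intro htf
  have hSgood : ({u ∈ {x : Fin (n + 1) → ℤ |
      |(x 0 : ℝ) + ∑ i : Fin n, (x i.succ : ℝ) * θ i| ≤ maxAbs x ^ (-ω1)} |
        U0 < maxAbs u} : Set (Fin (n + 1) → ℤ)).Infinite := by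
    have h1 := hS.diff (finite_maxAbs_le U0)
    refine h1.mono ?_
    intro u hu
    exact ⟨hu.1, lt_of_not_ge hu.2⟩
  set Sgood := {u ∈ {x : Fin (n + 1) → ℤ |
      |(x 0 : ℝ) + ∑ i : Fin n, (x i.succ : ℝ) * θ i| ≤ maxAbs x ^ (-ω1)} |
        U0 < maxAbs u} with hSgooddef
  set G : (Fin (n + 1) → ℤ) → (Fin (n + 1) → ℤ) := fun u =>
    if h : (|(u 0 : ℝ) + ∑ i : Fin n, (u i.succ : ℝ) * θ i| ≤ maxAbs u ^ (-ω1))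
        ∧ U0 < maxAbs u then
      Classical.choose (hstep u h.1 h.2)
    else 0 with hG
  have hGspec : ∀ u ∈ Sgood, 1 ≤ G u 0 ∧
      (∀ i : Fin n, |(G u 0 : ℝ) * θ i - (G u i.succ : ℝ)| ≤ maxAbs (G u) ^ (-ws)) ∧
      (∀ i : Fin n, |DD θ (G u) i| ≤ 2 * (n : ℝ) * (maxAbs u) ^ (-(ω1 / n))) := by
    intro u hu
    have h : (|(u 0 : ℝ) + ∑ i : Fin n, (u i.succ : ℝ) * θ i| ≤ maxAbs u ^ (-ω1))
        ∧ U0 < maxAbs u := ⟨hu.1, hu.2⟩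
    rw [hG]
    simp only [dif_pos h]
    exact Classical.choose_spec (hstep u h.1 h.2)
  have himg : ∀ u ∈ Sgood, G u ∈ {x : Fin (n + 1) → ℤ | ∀ i : Fin n,
      |(x 0 : ℝ) * θ i - (x i.succ : ℝ)| ≤ maxAbs x ^ (-ws)} := by
    intro u hu
    exact (hGspec u hu).2.1
  obtain ⟨ystar, hystar, hfib⟩ : ∃ y' ∈ {x : Fin (n + 1) → ℤ | ∀ i : Fin n,
      |(x 0 : ℝ) * θ i - (x i.succ : ℝ)| ≤ maxAbs x ^ (-ws)},
      {u ∈ Sgood | G u = y'}.Infinite := by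
    by_contra hall
    push_neg at hall
    have hsub : Sgood ⊆ ⋃ y' ∈ {x : Fin (n + 1) → ℤ | ∀ i : Fin n,
        |(x 0 : ℝ) * θ i - (x i.succ : ℝ)| ≤ maxAbs x ^ (-ws)}, {u ∈ Sgood | G u = y'} := by
      intro u hu
      exact Set.mem_biUnion (himg u hu) ⟨hu, rfl⟩
    exact hSgood ((htf.biUnion (fun y' hy' => hall y' hy')).subset hsub)
  obtain ⟨u1, hu1mem, hu1G⟩ := hfib.nonempty
  have hystar0 : 1 ≤ ystar 0 := by
    rw [← hu1G]
    exact (hGspec u1 hu1mem).1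
  have hDzero : ∀ i : Fin n, DD θ ystar i = 0 := by
    intro i
    by_contra hne0
    have hd : 0 < |DD θ ystar i| := abs_pos.mpr hne0
    set d := |DD θ ystar i| with hddef
    set B : ℝ := max 1 ((2 * (n : ℝ) / d) ^ ((n : ℝ) / ω1)) with hB
    obtain ⟨u2, hu2mem, hu2big⟩ := exists_gt_maxAbs_of_infinite hfib B
    obtain ⟨hu2good, hu2G⟩ := hu2mem
    have hbound := ((hGspec u2 hu2good).2.2 i)
    rw [hu2G] at hbound
    set M := maxAbs u2 with hM
    have hMpos : (0 : ℝ) < M := by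
      have : (1 : ℝ) ≤ B := le_max_left _ _
      linarith
    have hwn : (0 : ℝ) < ω1 / n := by positivity
    have hr1 : 2 * (n : ℝ) / d < M ^ (ω1 / n) := by
      have h1 : (2 * (n : ℝ) / d) ^ ((n : ℝ) / ω1) ≤ B := le_max_right _ _
      have h2 : B ^ (ω1 / n) < M ^ (ω1 / n) :=
        Real.rpow_lt_rpow (by positivity : (0 : ℝ) ≤ B) hu2big hwn
      have h3 : ((2 * (n : ℝ) / d) ^ ((n : ℝ) / ω1)) ^ (ω1 / n) ≤ B ^ (ω1 / n) :=
        Real.rpow_le_rpow (by positivity) h1 (le_of_lt hwn)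
      have h4 : ((2 * (n : ℝ) / d) ^ ((n : ℝ) / ω1)) ^ (ω1 / n) = 2 * (n : ℝ) / d := by
        rw [← Real.rpow_mul (by positivity)]
        rw [show (n : ℝ) / ω1 * (ω1 / n) = 1 by field_simp, Real.rpow_one]
      linarith [h4 ▸ h3]
    have hr2 : d * M ^ (ω1 / n) ≤ 2 * (n : ℝ) := by
      have h1 : M ^ (-(ω1 / n)) = (M ^ (ω1 / n))⁻¹ := Real.rpow_neg (le_of_lt hMpos) _
      have h2 : (0 : ℝ) < M ^ (ω1 / n) := Real.rpow_pos_of_pos hMpos _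
      calc d * M ^ (ω1 / n) ≤ (2 * (n : ℝ) * M ^ (-(ω1 / n))) * M ^ (ω1 / n) :=
            mul_le_mul_of_nonneg_right hbound (le_of_lt h2)
        _ = 2 * (n : ℝ) := by rw [h1]; field_simp
    have hr3 : 2 * (n : ℝ) < d * M ^ (ω1 / n) := by
      have h5 := mul_lt_mul_of_pos_left hr1 hd
      calc 2 * (n : ℝ) = d * (2 * (n : ℝ) / d) := by field_simp
        _ < d * M ^ (ω1 / n) := h5
    linarith
  have hystar0ne : ystar 0 ≠ 0 := by omega
  exact DD_all_zero hn hθ hystar0ne hDzero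

lemma Z0 (θ : Fin n → ℝ) : {y : Fin (n + 1) → ℤ |
    ∀ i : Fin n, |(y 0 : ℝ) * θ i - (y i.succ : ℝ)| ≤ maxAbs y ^ (-(0 : ℝ))}.Infinite := by
  refine Set.infinite_of_injective_forall_mem
    (f := fun m : ℕ => (Fin.cons (m : ℤ) (fun i => round ((m : ℝ) * θ i)) : Fin (n + 1) → ℤ))
    ?_ ?_
  · intro a b hab
    have := congrFun hab 0
    simp only [Fin.cons_zero] at this
    exact_mod_cast this
  · intro m i
    rw [neg_zero, Real.rpow_zero]
    simp only [Fin.cons_zero, Fin.cons_succ]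
    push_cast
    have := abs_sub_round ((m : ℝ) * θ i)
    calc |(m : ℝ) * θ i - ((round ((m : ℝ) * θ i) : ℤ) : ℝ)| ≤ 1 / 2 := by
          push_cast at this ⊢
          exact this
      _ ≤ 1 := by norm_num

lemma ZL (hn : 0 < n) (θ : Fin n → ℝ) : {x : Fin (n + 1) → ℤ |
    |(x 0 : ℝ) + ∑ i : Fin n, (x i.succ : ℝ) * θ i| ≤ maxAbs x ^ (-(0 : ℝ))}.Infinite := by
  classical
  set i0 : Fin n := ⟨0, hn⟩
  refine Set.infinite_of_injective_forall_mem
    (f := fun m : ℕ => (Fin.cons (-(round ((m : ℝ) * θ i0)))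
      (fun i => if i = i0 then (m : ℤ) else 0) : Fin (n + 1) → ℤ)) ?_ ?_
  · intro a b hab
    have := congrFun hab i0.succ
    simp only [Fin.cons_succ, if_pos rfl] at this
    exact_mod_cast this
  · intro m
    simp only [Set.mem_setOf_eq, neg_zero, Real.rpow_zero, Fin.cons_zero, Fin.cons_succ]
    rw [show (∑ i : Fin n, (((if i = i0 then (m : ℤ) else 0) : ℤ) : ℝ) * θ i)
        = ∑ i : Fin n, (if i = i0 then (m : ℝ) * θ i else 0) from
      Finset.sum_congr rfl fun i _ => by split_ifs <;> push_cast <;> ring]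
    rw [Finset.sum_ite_eq' Finset.univ i0 (fun i => (m : ℝ) * θ i)]
    simp only [Finset.mem_univ, if_pos]
    push_cast
    have h3 := abs_sub_round ((m : ℝ) * θ i0)
    calc |-((round ((m : ℝ) * θ i0) : ℤ) : ℝ) + (m : ℝ) * θ i0|
        = |(m : ℝ) * θ i0 - ((round ((m : ℝ) * θ i0) : ℤ) : ℝ)| := by
          congr 1
          ring
      _ ≤ 1 / 2 := by push_cast at h3 ⊢; exact h3
      _ ≤ 1 := by norm_num

end KhT

open KhT in
theorem KhT.khintchine_transference_aux (n : ℕ) (hn : 0 < n) (θ : Fin n → ℝ)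
    (hθ : LinearIndependent ℚ (Fin.cons (1 : ℝ) θ)) :
    (∀ ω : ℝ, 0 < ω → (ω : EReal) < sSup {w : EReal | ∃ ω' : ℝ, w = (ω' : EReal) ∧
      {x : Fin (n + 1) → ℤ |
        |(x 0 : ℝ) + ∑ i : Fin n, (x i.succ : ℝ) * θ i| ≤ maxAbs x ^ (-ω')}.Infinite} →
      ((ω / (((n : ℝ) - 1) * ω + (n : ℝ)) : ℝ) : EReal) ≤
        sSup {w : EReal | ∃ ω' : ℝ, w = (ω' : EReal) ∧
          {x : Fin (n + 1) → ℤ |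
            ∀ i : Fin n, |(x 0 : ℝ) * θ i - (x i.succ : ℝ)| ≤ maxAbs x ^ (-ω')}.Infinite}) ∧
    (∀ W : ℝ, sSup {w : EReal | ∃ ω' : ℝ, w = (ω' : EReal) ∧
      {x : Fin (n + 1) → ℤ |
        |(x 0 : ℝ) + ∑ i : Fin n, (x i.succ : ℝ) * θ i| ≤ maxAbs x ^ (-ω')}.Infinite} = (W : EReal) →
      sSup {w : EReal | ∃ ω' : ℝ, w = (ω' : EReal) ∧
        {x : Fin (n + 1) → ℤ |
          ∀ i : Fin n, |(x 0 : ℝ) * θ i - (x i.succ : ℝ)| ≤ maxAbs x ^ (-ω')}.Infinite}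
        ≤ (((W - (n : ℝ) + 1) / (n : ℝ) : ℝ) : EReal)) := by
  have hn1R : (1 : ℝ) ≤ (n : ℝ) := Nat.one_le_cast.mpr hn
  have hnR : (0 : ℝ) < (n : ℝ) := by linarith
  constructor
  · intro ω hω hlt
    obtain ⟨w, hwmem, hgt⟩ := lt_sSup_iff.mp hlt
    obtain ⟨ω1, rfl, hinf⟩ := hwmem
    have hωω1 : ω < ω1 := by exact_mod_cast hgt
    have hT := Amain hn hθ ω ω1 hω hωω1 hinf
    exact le_sSup ⟨ω / (((n : ℝ) - 1) * ω + (n : ℝ)), rfl, hT⟩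
  · intro W hW
    have keyW : ∀ ω' : ℝ, {x : Fin (n + 1) → ℤ |
        |(x 0 : ℝ) + ∑ i : Fin n, (x i.succ : ℝ) * θ i| ≤ maxAbs x ^ (-ω')}.Infinite →
        ω' ≤ W := by
      intro ω' h
      have h2 := le_sSup (s := {w : EReal | ∃ ω'' : ℝ, w = (ω'' : EReal) ∧
        {x : Fin (n + 1) → ℤ |
          |(x 0 : ℝ) + ∑ i : Fin n, (x i.succ : ℝ) * θ i| ≤ maxAbs x ^ (-ω'')}.Infinite})
        (a := (ω' : EReal)) ⟨ω', rfl, h⟩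
      rw [hW] at h2
      exact_mod_cast h2
    have hWn1 : (n : ℝ) - 1 ≤ W := by
      rcases eq_or_lt_of_le hn1R with h1 | h1
      · -- n = 1
        have h0 : (0 : ℝ) ≤ W := keyW 0 (ZL hn θ)
        linarith
      · -- n ≥ 2 : use Bmain with ω0 = 0
        by_contra hc
        push_neg at hc
        set ω' : ℝ := (W + ((n : ℝ) - 1)) / 2 with hω'
        have hω'lt : ω' < (n : ℝ) * 0 + n - 1 := by rw [hω']; ring_nf; linarith
        have hs0 : 0 < (n : ℝ) * 0 + n - 1 := by linarith
        have hB := Bmain hn hθ 0 le_rfl hs0 (Z0 θ) ω' hω'lt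
        have := keyW ω' hB
        rw [hω'] at this
        linarith
    apply sSup_le
    rintro w ⟨ω0, rfl, hinf⟩
    rw [EReal.coe_le_coe_iff]
    rcases le_or_gt ω0 0 with hc | hc
    · have : (0 : ℝ) ≤ (W - (n : ℝ) + 1) / n := by
        apply div_nonneg ?_ (le_of_lt hnR)
        linarith
      linarith
    · have hs0 : 0 < (n : ℝ) * ω0 + n - 1 := by nlinarith
      have hkey : (n : ℝ) * ω0 + n - 1 ≤ W := by
        by_contra hc2
        push_neg at hc2
        set ω' : ℝ := (W + ((n : ℝ) * ω0 + n - 1)) / 2 with hω'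
        have hω'lt : ω' < (n : ℝ) * ω0 + n - 1 := by rw [hω']; linarith
        have hB := Bmain hn hθ ω0 (le_of_lt hc) hs0 hinf ω' hω'lt
        have := keyW ω' hB
        rw [hω'] at this
        linarith
      rw [le_div_iff₀ hnR]
      linarith

/-- **Khintchine's transference principle.** For `Θ ∈ ℝⁿ` with `1, θ₁, …, θₙ` linearly
independent over `ℚ`: for every real `ω` with `0 < ω < ω_{n-1}(Θ)` one has
`ω_0(Θ) ≥ ω/((n-1)ω + n)`; moreover, if `ω_{n-1}(Θ)` is finite (equal to a real `W`),
then `ω_0(Θ) ≤ (W - n + 1)/n`. -/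
theorem khintchine_transference (n : ℕ) (hn : 0 < n) (θ : Fin n → ℝ)
    (hθ : LinearIndependent ℚ (Fin.cons (1 : ℝ) θ)) :
    (∀ ω : ℝ, 0 < ω → (ω : EReal) < omegaLastT n θ →
      ((ω / (((n : ℝ) - 1) * ω + (n : ℝ)) : ℝ) : EReal) ≤ omega0T n θ) ∧
    (∀ W : ℝ, omegaLastT n θ = (W : EReal) →
      omega0T n θ ≤ (((W - (n : ℝ) + 1) / (n : ℝ) : ℝ) : EReal)) := by
  unfold omega0T omegaLastT
  exact KhT.khintchine_transference_aux n hn θ hθ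
end
end

section
/- (Going-up transfer, inequality (2.2).) For all real numbers ω and ŵ with −1 ≤ ω < ω_0(Θ) and 0 < ŵ < min(1, ω̂_0(Θ)), one has ω_1(Θ) ≥ (ω + ŵ)/(1 − ŵ); in particular ω_1(Θ) ≥ (ω_0(Θ) + ω̂_0(Θ))/(1 − ω̂_0(Θ)). -/
open scoped BigOperators Pointwise

noncomputable section

namespace GoingUp

open Finset

variable {n r : ℕ}

lemma mvNorm_nonneg (X : MultiVec n r) : 0 ≤ mvNorm X := Real.sqrt_nonneg _

lemma abs_coord_le_mvNorm (X : MultiVec n r) (S : {S : Finset (Fin (n+1)) // S.card = r}) :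
    |X S| ≤ mvNorm X := by
  rw [mvNorm, ← Real.sqrt_sq_eq_abs]
  exact Real.sqrt_le_sqrt <| Finset.single_le_sum (f := fun S => X S ^ 2)
    (fun i _ => sq_nonneg _) (Finset.mem_univ S)

lemma mvNorm_le_sum (X : MultiVec n r) : mvNorm X ≤ ∑ S, |X S| := by
  rw [mvNorm]
  have h1 : ∑ S, X S ^ 2 ≤ (∑ S, |X S|) ^ 2 := by
    rw [sq, Finset.sum_mul]
    refine Finset.sum_le_sum fun S _ => ?_
    rw [← sq_abs, sq]
    exact mul_le_mul_of_nonneg_left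
      (Finset.single_le_sum (f := fun T => |X T|) (fun i _ => abs_nonneg _) (Finset.mem_univ S))
      (abs_nonneg _)
  calc Real.sqrt (∑ S, X S ^ 2) ≤ Real.sqrt ((∑ S, |X S|) ^ 2) := Real.sqrt_le_sqrt h1
  _ = abs (∑ S, |X S|) := Real.sqrt_sq_eq_abs _
  _ = ∑ S, |X S| := abs_of_nonneg (Finset.sum_nonneg fun S _ => abs_nonneg _)

lemma card_mv_le : (Fintype.card {S : Finset (Fin (n+1)) // S.card = r} : ℝ) ≤ (2:ℝ) ^ (n+1) := by
  have h1 : Fintype.card {S : Finset (Fin (n+1)) // S.card = r}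
      ≤ Fintype.card (Finset (Fin (n+1))) := Fintype.card_subtype_le _
  have h2 : Fintype.card (Finset (Fin (n+1))) = 2 ^ (n+1) := by
    rw [Fintype.card_finset, Fintype.card_fin]
  calc (Fintype.card {S : Finset (Fin (n+1)) // S.card = r} : ℝ)
      ≤ (Fintype.card (Finset (Fin (n+1))) : ℝ) := by exact_mod_cast h1
  _ = (2:ℝ) ^ (n+1) := by rw [h2]; push_cast; ring

lemma mvNorm_le_card_mul (X : MultiVec n r) {B : ℝ} (hBnn : 0 ≤ B) (hB : ∀ S, |X S| ≤ B) :
    mvNorm X ≤ (2:ℝ) ^ (n+1) * B := by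
  calc mvNorm X ≤ ∑ S, |X S| := mvNorm_le_sum X
  _ ≤ ∑ _S : {S : Finset (Fin (n+1)) // S.card = r}, B := Finset.sum_le_sum fun S _ => hB S
  _ = (Fintype.card {S : Finset (Fin (n+1)) // S.card = r} : ℝ) * B := by
      rw [Finset.sum_const, Finset.card_univ, nsmul_eq_mul]
  _ ≤ (2:ℝ) ^ (n+1) * B := mul_le_mul_of_nonneg_right card_mv_le hBnn

lemma mvNorm_eq_zero_iff (X : MultiVec n r) : mvNorm X = 0 ↔ X = 0 := by
  constructor
  · intro h
    funext S
    have h1 : |X S| ≤ 0 := h ▸ abs_coord_le_mvNorm X S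
    have := abs_nonneg (X S)
    have : |X S| = 0 := le_antisymm h1 this
    simpa using this
  · intro h; rw [h, mvNorm]; simp [Pi.zero_apply]

lemma mvNorm_pos_of_ne_zero {X : MultiVec n r} (h : X ≠ 0) : 0 < mvNorm X :=
  lt_of_le_of_ne (mvNorm_nonneg X) (fun h0 => h ((mvNorm_eq_zero_iff X).mp h0.symm))

lemma one_le_mvNorm {X : MultiVec n r} (hint : mvIntegral X) (h : X ≠ 0) : 1 ≤ mvNorm X := by
  have : ∃ S, X S ≠ 0 := by
    by_contra hc
    push_neg at hc
    exact h (funext fun S => hc S)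
  obtain ⟨S, hS⟩ := this
  obtain ⟨k, hk⟩ := hint S
  have hkne : k ≠ 0 := by rintro rfl; simp at hk; exact hS hk
  have h1 : (1:ℝ) ≤ |X S| := by
    rw [hk]
    have : (1:ℤ) ≤ |k| := Int.one_le_abs hkne
    calc (1:ℝ) ≤ (|k| : ℤ) := by exact_mod_cast this
    _ = |(k:ℝ)| := by push_cast; ring
  exact le_trans h1 (abs_coord_le_mvNorm X S)

lemma mvNorm_const_mul (c : ℝ) (X : MultiVec n r) :
    mvNorm (fun S => c * X S) = |c| * mvNorm X := by
  rw [mvNorm, mvNorm]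
  have : ∑ S, (c * X S) ^ 2 = c^2 * ∑ S, X S ^ 2 := by
    rw [Finset.mul_sum]; exact Finset.sum_congr rfl fun S _ => by ring
  rw [this, Real.sqrt_mul (sq_nonneg c), Real.sqrt_sq_eq_abs]


/-- Total version of coordinates of a multivector. -/
def Xof (X : MultiVec n r) (s : Finset (Fin (n+1))) : ℝ :=
  if h : s.card = r then X ⟨s, h⟩ else 0

lemma Xof_val (X : MultiVec n r) (S : {S : Finset (Fin (n+1)) // S.card = r}) :
    Xof X S.1 = X S := by
  rw [Xof, dif_pos S.2]

lemma abs_Xof_le (X : MultiVec n r) (s : Finset (Fin (n+1))) : |Xof X s| ≤ mvNorm X := by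
  rw [Xof]
  split
  · exact abs_coord_le_mvNorm X _
  · simpa using mvNorm_nonneg X

lemma vWedge_coord (y : Fin (n+1) → ℝ) (X : MultiVec n r)
    (T : {S : Finset (Fin (n+1)) // S.card = r + 1}) :
    vWedge y X T = ∑ a ∈ T.1,
      (-1 : ℝ) ^ ((T.1.filter (· < a)).card) * y a * Xof X (T.1.erase a) := by
  rw [vWedge, ← Finset.sum_attach T.1
    (fun a => (-1 : ℝ) ^ ((T.1.filter (· < a)).card) * y a * Xof X (T.1.erase a))]
  refine Finset.sum_congr rfl fun i _ => ?_
  have hc : (T.1.erase i.1).card = r := by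
    rw [Finset.card_erase_of_mem i.2, T.2]; omega
  rw [Xof, dif_pos hc]

lemma card2_sorted {s : Finset (Fin (n+1))} (h : s.card = 2) :
    ∃ i j, i < j ∧ s = {i, j} := by
  obtain ⟨a, b, hab, rfl⟩ := Finset.card_eq_two.mp h
  rcases lt_or_gt_of_ne hab with hlt | hgt
  · exact ⟨a, b, hlt, rfl⟩
  · exact ⟨b, a, hgt, Finset.pair_comm a b⟩

lemma card3_sorted {s : Finset (Fin (n+1))} (h : s.card = 3) :
    ∃ i j k, i < j ∧ j < k ∧ s = {i, j, k} := by
  obtain ⟨a, b, c, hab, hac, hbc, rfl⟩ := Finset.card_eq_three.mp h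
  rcases lt_or_gt_of_ne hab with h1 | h1 <;> rcases lt_or_gt_of_ne hac with h2 | h2 <;>
    rcases lt_or_gt_of_ne hbc with h3 | h3
  · exact ⟨a, b, c, h1, h3, rfl⟩
  · exact ⟨a, c, b, h2, h3, by ext w; simp only [Finset.mem_insert, Finset.mem_singleton]; tauto⟩
  · exact absurd (lt_trans h1 h3) (not_lt.mpr h2.le)
  · exact ⟨c, a, b, h2, h1, by ext w; simp only [Finset.mem_insert, Finset.mem_singleton]; tauto⟩
  · exact ⟨b, a, c, h1, h2, by ext w; simp only [Finset.mem_insert, Finset.mem_singleton]; tauto⟩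
  · exact absurd (lt_trans h2 h3) (not_lt.mpr h1.le)
  · exact ⟨b, c, a, h3, h2, by ext w; simp only [Finset.mem_insert, Finset.mem_singleton]; tauto⟩
  · exact ⟨c, b, a, h3, h1, by ext w; simp only [Finset.mem_insert, Finset.mem_singleton]; tauto⟩

lemma pair_erase_left {i j : Fin (n+1)} (hij : i ≠ j) :
    ({i, j} : Finset (Fin (n+1))).erase i = {j} := by
  rw [show ({i,j} : Finset (Fin (n+1))) = insert i {j} from rfl,
    Finset.erase_insert (by simp [hij])]

lemma pair_erase_right {i j : Fin (n+1)} (hij : i ≠ j) :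
    ({i, j} : Finset (Fin (n+1))).erase j = {i} := by
  rw [Finset.pair_comm, pair_erase_left hij.symm]

lemma filter_pair_left {i j : Fin (n+1)} (hij : i < j) :
    ({i, j} : Finset (Fin (n+1))).filter (· < i) = ∅ := by
  ext w
  simp only [Finset.mem_filter, Finset.mem_insert, Finset.mem_singleton,
    Finset.notMem_empty, iff_false, not_and]
  rintro (rfl | rfl)
  · exact lt_irrefl _
  · exact fun h => absurd (lt_trans hij h) (lt_irrefl _)

lemma filter_pair_right {i j : Fin (n+1)} (hij : i < j) :
    ({i, j} : Finset (Fin (n+1))).filter (· < j) = {i} := by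
  ext w
  simp only [Finset.mem_filter, Finset.mem_insert, Finset.mem_singleton]
  constructor
  · rintro ⟨rfl | rfl, h⟩
    · rfl
    · exact absurd h (lt_irrefl _)
  · rintro rfl; exact ⟨Or.inl rfl, hij⟩

lemma vWedge_pair (u : Fin (n+1) → ℝ) (X : MultiVec n 1) {i j : Fin (n+1)} (hij : i < j)
    (hT : ({i, j} : Finset (Fin (n+1))).card = 2) :
    vWedge u X ⟨{i, j}, hT⟩ = u i * Xof X {j} - u j * Xof X {i} := by
  rw [vWedge_coord]
  simp only
  rw [show ({i,j} : Finset (Fin (n+1))) = insert i {j} from rfl,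
    Finset.sum_insert (by simp [hij.ne]), Finset.sum_singleton]
  rw [show (insert i {j} : Finset (Fin (n+1))) = {i,j} from rfl]
  rw [pair_erase_left hij.ne, pair_erase_right hij.ne,
    filter_pair_left hij, filter_pair_right hij]
  simp only [Finset.card_empty, Finset.card_singleton, pow_zero, pow_one]
  ring

lemma triple_erase_1 {i j k : Fin (n+1)} (h1 : i ≠ j) (h2 : i ≠ k) (h3 : j ≠ k) :
    ({i, j, k} : Finset (Fin (n+1))).erase i = {j, k} := by
  rw [show ({i,j,k} : Finset (Fin (n+1))) = insert i {j,k} from rfl,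
    Finset.erase_insert (by simp [h1, h2])]

lemma triple_erase_2 {i j k : Fin (n+1)} (h1 : i ≠ j) (h2 : i ≠ k) (h3 : j ≠ k) :
    ({i, j, k} : Finset (Fin (n+1))).erase j = {i, k} := by
  have : ({i,j,k} : Finset (Fin (n+1))) = insert j {i,k} := by
    ext w; simp only [Finset.mem_insert, Finset.mem_singleton]; tauto
  rw [this, Finset.erase_insert (by simp [h1.symm, h3])]

lemma triple_erase_3 {i j k : Fin (n+1)} (h1 : i ≠ j) (h2 : i ≠ k) (h3 : j ≠ k) :
    ({i, j, k} : Finset (Fin (n+1))).erase k = {i, j} := by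
  have : ({i,j,k} : Finset (Fin (n+1))) = insert k {i,j} := by
    ext w; simp only [Finset.mem_insert, Finset.mem_singleton]; tauto
  rw [this, Finset.erase_insert (by simp [h2.symm, h3.symm])]

lemma filter_triple_1 {i j k : Fin (n+1)} (hij : i < j) (hjk : j < k) :
    ({i, j, k} : Finset (Fin (n+1))).filter (· < i) = ∅ := by
  ext w
  simp only [Finset.mem_filter, Finset.mem_insert, Finset.mem_singleton,
    Finset.notMem_empty, iff_false, not_and]
  rintro (rfl | rfl | rfl) h
  · exact absurd h (lt_irrefl _)
  · exact absurd (lt_trans hij h) (lt_irrefl _)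
  · exact absurd (lt_trans (lt_trans hij hjk) h) (lt_irrefl _)

lemma filter_triple_2 {i j k : Fin (n+1)} (hij : i < j) (hjk : j < k) :
    ({i, j, k} : Finset (Fin (n+1))).filter (· < j) = {i} := by
  ext w
  simp only [Finset.mem_filter, Finset.mem_insert, Finset.mem_singleton]
  constructor
  · rintro ⟨rfl | rfl | rfl, h⟩
    · rfl
    · exact absurd h (lt_irrefl _)
    · exact absurd (lt_trans hjk h) (lt_irrefl _)
  · rintro rfl; exact ⟨Or.inl rfl, hij⟩

lemma filter_triple_3 {i j k : Fin (n+1)} (hij : i < j) (hjk : j < k) :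
    ({i, j, k} : Finset (Fin (n+1))).filter (· < k) = {i, j} := by
  ext w
  simp only [Finset.mem_filter, Finset.mem_insert, Finset.mem_singleton]
  constructor
  · rintro ⟨rfl | rfl | rfl, h⟩
    · exact Or.inl rfl
    · exact Or.inr rfl
    · exact absurd h (lt_irrefl _)
  · rintro (rfl | rfl)
    · exact ⟨Or.inl rfl, lt_trans hij hjk⟩
    · exact ⟨Or.inr (Or.inl rfl), hjk⟩

lemma vWedge_triple (u : Fin (n+1) → ℝ) (Z : MultiVec n 2) {i j k : Fin (n+1)}
    (hij : i < j) (hjk : j < k) (hT : ({i, j, k} : Finset (Fin (n+1))).card = 3) :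
    vWedge u Z ⟨{i, j, k}, hT⟩
      = u i * Xof Z {j, k} - u j * Xof Z {i, k} + u k * Xof Z {i, j} := by
  have h1 : i ≠ j := hij.ne
  have h2 : i ≠ k := (lt_trans hij hjk).ne
  have h3 : j ≠ k := hjk.ne
  rw [vWedge_coord]
  simp only
  rw [show ({i,j,k} : Finset (Fin (n+1))) = insert i (insert j {k}) from rfl,
    Finset.sum_insert (by simp [h1, h2]), Finset.sum_insert (by simp [h3]),
    Finset.sum_singleton]
  rw [show (insert i (insert j {k}) : Finset (Fin (n+1))) = {i,j,k} from rfl]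
  rw [triple_erase_1 h1 h2 h3, triple_erase_2 h1 h2 h3, triple_erase_3 h1 h2 h3,
    filter_triple_1 hij hjk, filter_triple_2 hij hjk, filter_triple_3 hij hjk]
  have : ({i, j} : Finset (Fin (n+1))).card = 2 := Finset.card_pair h1
  simp only [Finset.card_empty, Finset.card_singleton, this, pow_zero, pow_one]
  ring

lemma Xof_vecToMulti (w : Fin (n+1) → ℝ) (a : Fin (n+1)) :
    Xof (vecToMulti w) {a} = w a := by
  rw [Xof, dif_pos (Finset.card_singleton a)]
  rw [vecToMulti]
  exact Finset.sum_singleton _ _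

/-- The wedge of two vectors, as a 2-multivector. -/
def Wdg (u w : Fin (n+1) → ℝ) : MultiVec n 2 := vWedge u (vecToMulti w)

lemma Xof_Wdg (u w : Fin (n+1) → ℝ) {i j : Fin (n+1)} (hij : i < j) :
    Xof (Wdg u w) {i, j} = u i * w j - u j * w i := by
  have hc : ({i,j} : Finset (Fin (n+1))).card = 2 := Finset.card_pair hij.ne
  rw [Xof, dif_pos hc, Wdg, vWedge_pair u _ hij hc, Xof_vecToMulti, Xof_vecToMulti]

lemma triple_card {i j k : Fin (n+1)} (hij : i < j) (hjk : j < k) :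
    ({i, j, k} : Finset (Fin (n+1))).card = 3 := by
  have h1 : i ≠ j := hij.ne
  have h2 : i ≠ k := (lt_trans hij hjk).ne
  have h3 : j ≠ k := hjk.ne
  rw [show ({i,j,k} : Finset (Fin (n+1))) = insert i {j,k} from rfl,
    Finset.card_insert_of_notMem (by simp [h1, h2]), Finset.card_pair h3]

lemma Xof_vWedge_triple (u : Fin (n+1) → ℝ) (Z : MultiVec n 2) {i j k : Fin (n+1)}
    (hij : i < j) (hjk : j < k) :
    Xof (vWedge u Z) {i, j, k}
      = u i * Xof Z {j, k} - u j * Xof Z {i, k} + u k * Xof Z {i, j} := by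
  have hc := triple_card hij hjk
  rw [Xof, dif_pos hc]
  exact vWedge_triple u Z hij hjk hc

lemma abs_triple_le {A B C M : ℝ} (hA : |A| ≤ M) (hB : |B| ≤ M) (hC : |C| ≤ M) :
    |A - B + C| ≤ 3 * M := by
  calc |A - B + C| ≤ |A - B| + |C| := abs_add_le _ _
  _ ≤ |A| + |B| + |C| := by
      have : |A - B| ≤ |A| + |B| := (abs_sub A B)
      linarith
  _ ≤ 3 * M := by linarith

lemma quality_bound (u x z : Fin (n+1) → ℝ) (M E : ℝ) (hMnn : 0 ≤ M) (hEnn : 0 ≤ E)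
    (hM : ∀ i j : Fin (n+1), i < j → |u i * x j - u j * x i| ≤ M)
    (hE : ∀ a, |z a - z 0 * u a| ≤ E) :
    mvNorm (vWedge u (Wdg x z)) ≤ (2:ℝ)^(n+1) * (3 * (E * M)) := by
  apply mvNorm_le_card_mul _ (by positivity)
  intro T
  obtain ⟨i, j, k, hij, hjk, hT⟩ := card3_sorted T.2
  rw [show vWedge u (Wdg x z) T = Xof (vWedge u (Wdg x z)) T.1 from (Xof_val _ T).symm,
    hT, Xof_vWedge_triple u _ hij hjk,
    Xof_Wdg x z hjk, Xof_Wdg x z (lt_trans hij hjk), Xof_Wdg x z hij]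
  have key : u i * (x j * z k - x k * z j) - u j * (x i * z k - x k * z i)
      + u k * (x i * z j - x j * z i)
      = (z i - z 0 * u i) * (u j * x k - u k * x j)
        - (z j - z 0 * u j) * (u i * x k - u k * x i)
        + (z k - z 0 * u k) * (u i * x j - u j * x i) := by ring
  rw [key]
  refine abs_triple_le ?_ ?_ ?_ <;>
    · rw [abs_mul]
      exact mul_le_mul (hE _) (hM _ _ (by first | exact hjk | exact lt_trans hij hjk | exact hij))
        (abs_nonneg _) hEnn

lemma size_bound (u x z : Fin (n+1) → ℝ) (M E T N : ℝ)
    (hMnn : 0 ≤ M) (hEnn : 0 ≤ E) (hTnn : 0 ≤ T) (hNnn : 0 ≤ N)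
    (hM : ∀ i j : Fin (n+1), i < j → |u i * x j - u j * x i| ≤ M)
    (hE : ∀ a, |z a - z 0 * u a| ≤ E)
    (hz0 : |z 0| ≤ T) (hx : ∀ a, |x a| ≤ N) :
    mvNorm (Wdg x z) ≤ (2:ℝ)^(n+1) * (T * M + 2 * (N * E)) := by
  apply mvNorm_le_card_mul _ (by positivity)
  intro S
  obtain ⟨i, j, hij, hS⟩ := card2_sorted S.2
  rw [show Wdg x z S = Xof (Wdg x z) S.1 from (Xof_val _ S).symm, hS, Xof_Wdg x z hij]
  have key : x i * z j - x j * z i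
      = z 0 * (x i * u j - x j * u i)
        + (x i * (z j - z 0 * u j) - x j * (z i - z 0 * u i)) := by ring
  rw [key]
  have h1 : |z 0 * (x i * u j - x j * u i)| ≤ T * M := by
    rw [abs_mul]
    have : x i * u j - x j * u i = -(u i * x j - u j * x i) := by ring
    rw [this, abs_neg]
    exact mul_le_mul hz0 (hM i j hij) (abs_nonneg _) hTnn
  have h2 : |x i * (z j - z 0 * u j) - x j * (z i - z 0 * u i)| ≤ 2 * (N * E) := by
    have ha : |x i * (z j - z 0 * u j)| ≤ N * E := by
      rw [abs_mul]; exact mul_le_mul (hx i) (hE j) (abs_nonneg _) hNnn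
    have hb : |x j * (z i - z 0 * u i)| ≤ N * E := by
      rw [abs_mul]; exact mul_le_mul (hx j) (hE i) (abs_nonneg _) hNnn
    calc |x i * (z j - z 0 * u j) - x j * (z i - z 0 * u i)|
        ≤ |x i * (z j - z 0 * u j)| + |x j * (z i - z 0 * u i)| := abs_sub _ _
    _ ≤ 2 * (N * E) := by linarith
  calc |z 0 * (x i * u j - x j * u i)
        + (x i * (z j - z 0 * u j) - x j * (z i - z 0 * u i))|
      ≤ |z 0 * (x i * u j - x j * u i)|
        + |x i * (z j - z 0 * u j) - x j * (z i - z 0 * u i)| := abs_add_le _ _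
  _ ≤ T * M + 2 * (N * E) := by linarith

lemma deg1_bound (u z : Fin (n+1) → ℝ) (E Yb : ℝ) (hEnn : 0 ≤ E) (hYb : 0 ≤ Yb)
    (hu : ∀ a, |u a| ≤ Yb) (hE : ∀ a, |z a - z 0 * u a| ≤ E) :
    mvNorm (Wdg u z) ≤ (2:ℝ)^(n+1) * (2 * (Yb * E)) := by
  apply mvNorm_le_card_mul _ (by positivity)
  intro S
  obtain ⟨i, j, hij, hS⟩ := card2_sorted S.2
  rw [show Wdg u z S = Xof (Wdg u z) S.1 from (Xof_val _ S).symm, hS, Xof_Wdg u z hij]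
  have key : u i * z j - u j * z i
      = u i * (z j - z 0 * u j) - u j * (z i - z 0 * u i) := by ring
  rw [key]
  have ha : |u i * (z j - z 0 * u j)| ≤ Yb * E := by
    rw [abs_mul]; exact mul_le_mul (hu i) (hE j) (abs_nonneg _) hYb
  have hb : |u j * (z i - z 0 * u i)| ≤ Yb * E := by
    rw [abs_mul]; exact mul_le_mul (hu j) (hE i) (abs_nonneg _) hYb
  calc |u i * (z j - z 0 * u j) - u j * (z i - z 0 * u i)|
      ≤ |u i * (z j - z 0 * u j)| + |u j * (z i - z 0 * u i)| := abs_sub _ _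
  _ ≤ 2 * (Yb * E) := by linarith

/-- Real coercion of an integer vector. -/
def ic (x : Fin (n+1) → ℤ) : Fin (n+1) → ℝ := fun i => (x i : ℝ)

lemma vecToMulti_integral (x : Fin (n+1) → ℤ) : mvIntegral (vecToMulti (ic x)) := by
  intro S
  obtain ⟨a, hS⟩ := Finset.card_eq_one.mp S.2
  refine ⟨x a, ?_⟩
  rw [show vecToMulti (ic x) S = Xof (vecToMulti (ic x)) S.1 from (Xof_val _ S).symm, hS,
    Xof_vecToMulti]
  rfl

lemma Wdg_integral (x z : Fin (n+1) → ℤ) : mvIntegral (Wdg (ic x) (ic z)) := by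
  intro S
  obtain ⟨i, j, hij, hS⟩ := card2_sorted S.2
  refine ⟨x i * z j - x j * z i, ?_⟩
  rw [show Wdg (ic x) (ic z) S = Xof (Wdg (ic x) (ic z)) S.1 from (Xof_val _ S).symm, hS,
    Xof_Wdg _ _ hij]
  simp [ic]

lemma vecToMulti_eq_zero_iff (w : Fin (n+1) → ℝ) : vecToMulti w = 0 ↔ w = 0 := by
  constructor
  · intro h
    funext a
    have := congrFun h ⟨{a}, Finset.card_singleton a⟩
    rw [show vecToMulti w ⟨{a}, Finset.card_singleton a⟩
        = Xof (vecToMulti w) {a} from (Xof_val _ _).symm, Xof_vecToMulti] at this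
    exact this
  · rintro rfl
    funext S
    simp [vecToMulti]

lemma ic_eq_zero_iff (x : Fin (n+1) → ℤ) : ic x = 0 ↔ x = 0 := by
  constructor
  · intro h; funext a
    have := congrFun h a
    simpa [ic] using this
  · rintro rfl; funext a; simp [ic]

lemma exists_intvec (X : MultiVec n 1) (h : mvIntegral X) :
    ∃ x : Fin (n+1) → ℤ, X = vecToMulti (ic x) := by
  choose k hk using h
  refine ⟨fun i => k ⟨{i}, Finset.card_singleton i⟩, ?_⟩
  funext S
  obtain ⟨a, hS⟩ := Finset.card_eq_one.mp S.2
  have hSs : S = ⟨{a}, Finset.card_singleton a⟩ := Subtype.ext hS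
  rw [hSs, hk ⟨{a}, Finset.card_singleton a⟩,
    show vecToMulti (ic fun i => k ⟨{i}, Finset.card_singleton i⟩) ⟨{a}, Finset.card_singleton a⟩
      = Xof (vecToMulti (ic fun i => k ⟨{i}, Finset.card_singleton i⟩)) {a}
      from (Xof_val _ _).symm, Xof_vecToMulti]
  rfl

lemma vecToMulti_smul (c : ℝ) (w : Fin (n+1) → ℝ) :
    vecToMulti (fun i => c * w i) = fun S => c * vecToMulti w S := by
  funext S
  simp [vecToMulti, Finset.mul_sum]

lemma vWedge_smulX (u : Fin (n+1) → ℝ) (c : ℝ) (X : MultiVec n r) :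
    vWedge u (fun S => c * X S) = fun T => c * vWedge u X T := by
  funext T
  rw [vWedge, vWedge, Finset.mul_sum]
  exact Finset.sum_congr rfl fun i _ => by ring

lemma Wdg_smul (u : Fin (n+1) → ℝ) (c : ℝ) (w : Fin (n+1) → ℝ) :
    Wdg u (fun i => c * w i) = fun S => c * Wdg u w S := by
  rw [Wdg, vecToMulti_smul, vWedge_smulX]
  rfl

section Relations

variable {θ : Fin n → ℝ}

lemma relation_contra3 (hθ : LinearIndependent ℚ (Fin.cons (1 : ℝ) θ)) {a b c : Fin (n+1)}
    (hab : a ≠ b) (hac : a ≠ c) (hbc : b ≠ c) (ka kb kc : ℤ) (hka : ka ≠ 0)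
    (hrel : (ka : ℝ) * yTheta θ a + (kb : ℝ) * yTheta θ b + (kc : ℝ) * yTheta θ c = 0) :
    False := by
  set g : Fin (n+1) → ℚ := fun t =>
    if t = a then (ka : ℚ) else if t = b then (kb : ℚ) else if t = c then (kc : ℚ) else 0 with hg
  have hsum : ∑ t, g t • (yTheta θ) t = 0 := by
    have hz : ∀ t ∈ Finset.univ, t ∉ ({a, b, c} : Finset (Fin (n+1))) →
        g t • (yTheta θ) t = 0 := by
      intro t _ ht
      simp only [Finset.mem_insert, Finset.mem_singleton] at ht
      push_neg at ht
      simp [hg, ht.1, ht.2.1, ht.2.2]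
    rw [← Finset.sum_subset (Finset.subset_univ ({a, b, c} : Finset (Fin (n+1)))) hz,
      show ({a, b, c} : Finset (Fin (n+1))) = insert a (insert b {c}) from rfl,
      Finset.sum_insert (by simp [hab, hac]), Finset.sum_insert (by simp [hbc]),
      Finset.sum_singleton]
    have hga : g a = (ka : ℚ) := by simp [hg]
    have hgb : g b = (kb : ℚ) := by simp [hg, hab.symm]
    have hgc : g c = (kc : ℚ) := by simp [hg, hac.symm, hbc.symm]
    rw [hga, hgb, hgc]
    simp only [Rat.smul_def]
    push_cast
    linarith [hrel]
  have := (Fintype.linearIndependent_iff.mp hθ) g hsum a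
  rw [hg] at this
  simp only [if_pos rfl] at this
  exact hka (by exact_mod_cast this)

lemma relation_contra2 (hθ : LinearIndependent ℚ (Fin.cons (1 : ℝ) θ)) {a b : Fin (n+1)}
    (hab : a ≠ b) (ka kb : ℤ) (hka : ka ≠ 0)
    (hrel : (ka : ℝ) * yTheta θ a + (kb : ℝ) * yTheta θ b = 0) : False := by
  set g : Fin (n+1) → ℚ := fun t =>
    if t = a then (ka : ℚ) else if t = b then (kb : ℚ) else 0 with hg
  have hsum : ∑ t, g t • (yTheta θ) t = 0 := by
    have hz : ∀ t ∈ Finset.univ, t ∉ ({a, b} : Finset (Fin (n+1))) →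
        g t • (yTheta θ) t = 0 := by
      intro t _ ht
      simp only [Finset.mem_insert, Finset.mem_singleton] at ht
      push_neg at ht
      simp [hg, ht.1, ht.2]
    rw [← Finset.sum_subset (Finset.subset_univ ({a, b} : Finset (Fin (n+1)))) hz,
      show ({a, b} : Finset (Fin (n+1))) = insert a {b} from rfl,
      Finset.sum_insert (by simp [hab]), Finset.sum_singleton]
    have hga : g a = (ka : ℚ) := by simp [hg]
    have hgb : g b = (kb : ℚ) := by simp [hg, hab.symm]
    rw [hga, hgb]
    simp only [Rat.smul_def]
    push_cast
    linarith [hrel]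
  have := (Fintype.linearIndependent_iff.mp hθ) g hsum a
  rw [hg] at this
  simp only [if_pos rfl] at this
  exact hka (by exact_mod_cast this)

lemma deg1_wedge_ne (hθ : LinearIndependent ℚ (Fin.cons (1 : ℝ) θ)) (hn1 : 1 ≤ n)
    (x : Fin (n+1) → ℤ) (hx : x ≠ 0) :
    vWedge (yTheta θ) (vecToMulti (ic x)) ≠ 0 := by
  intro h0
  have hcoord : ∀ a : Fin n, (x a.succ : ℝ) - θ a * (x 0 : ℝ) = 0 := by
    intro a
    have h1 : Xof (vWedge (yTheta θ) (vecToMulti (ic x))) {0, a.succ} = 0 := by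
      rw [h0]; rw [Xof]; split <;> simp
    rw [show vWedge (yTheta θ) (vecToMulti (ic x)) = Wdg (yTheta θ) (ic x) from rfl] at h1
    rw [Xof_Wdg _ _ (Fin.succ_pos a)] at h1
    have hy0 : yTheta θ 0 = 1 := rfl
    have hys : yTheta θ a.succ = θ a := by rw [yTheta, Fin.cons_succ]
    rw [hy0, hys] at h1
    simpa [ic] using h1
  by_cases h00 : x 0 = 0
  · apply hx
    funext b
    refine Fin.cases ?_ ?_ b
    · exact h00
    · intro a
      have := hcoord a
      rw [h00] at this
      push_cast at this
      exact_mod_cast (by linarith : (x a.succ : ℝ) = 0)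
  · obtain ⟨a⟩ : Nonempty (Fin n) := ⟨⟨0, by omega⟩⟩
    refine relation_contra2 hθ (a := a.succ) (b := 0) (Fin.succ_ne_zero a) (x 0) (-(x a.succ))
      h00 ?_
    have hy0 : yTheta θ 0 = 1 := rfl
    have hys : yTheta θ a.succ = θ a := by rw [yTheta, Fin.cons_succ]
    rw [hy0, hys]
    have := hcoord a
    push_cast
    linarith

end Relations

section Gcd

/-- gcd of the coordinates. -/
def natGcd (x : Fin (n+1) → ℤ) : ℕ := Finset.univ.gcd (fun i => (x i).natAbs)

lemma exists_primitive (x : Fin (n+1) → ℤ) (hx : x ≠ 0) :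
    ∃ (G : ℕ) (ξ : Fin (n+1) → ℤ), 0 < G ∧ (∀ i, x i = (G : ℤ) * ξ i) ∧ natGcd ξ = 1 := by
  have hG0 : natGcd x ≠ 0 := by
    intro h
    apply hx; funext i
    exact Int.natAbs_eq_zero.mp (Finset.gcd_eq_zero_iff.mp h i (Finset.mem_univ i))
  set G := natGcd x with hGdef
  have hdvd : ∀ i, (G : ℤ) ∣ x i := by
    intro i
    exact Int.dvd_natAbs.mp
      (Int.natCast_dvd_natCast.mpr (Finset.gcd_dvd (Finset.mem_univ i)))
  refine ⟨G, fun i => x i / G, Nat.pos_of_ne_zero hG0, fun i =>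
    (Int.mul_ediv_cancel' (hdvd i)).symm, ?_⟩
  have hre : ∀ i ∈ Finset.univ, (x i).natAbs = G * ((x i / (G:ℤ)).natAbs) := by
    intro i _
    have h1 : x i = (G : ℤ) * (x i / G) := (Int.mul_ediv_cancel' (hdvd i)).symm
    calc (x i).natAbs = ((G : ℤ) * (x i / G)).natAbs := by rw [← h1]
    _ = G * (x i / (G:ℤ)).natAbs := by rw [Int.natAbs_mul, Int.natAbs_natCast]
  have hmul : G = G * natGcd (fun i => x i / (G:ℤ)) := by
    conv_lhs => rw [hGdef]
    unfold natGcd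
    rw [Finset.gcd_congr rfl hre, Finset.gcd_mul_left]
    simp
  rcases hd : natGcd (fun i => x i / (G:ℤ)) with _ | d
  · rw [hd] at hmul; simp at hmul; omega
  · rw [hd] at hmul
    nlinarith [Nat.pos_of_ne_zero hG0]

lemma prim_dvd (ξ : Fin (n+1) → ℤ) (hprim : natGcd ξ = 1) {p : Fin (n+1)} (w : ℤ)
    (h : ∀ i, ξ p ∣ w * ξ i) : ξ p ∣ w := by
  have h2 : (ξ p).natAbs ∣ Finset.univ.gcd (fun i => w.natAbs * (ξ i).natAbs) := by
    refine Finset.dvd_gcd fun i _ => ?_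
    rw [← Int.natAbs_mul]
    exact Int.natAbs_dvd_natAbs.mpr (h i)
  rw [Finset.gcd_mul_left] at h2
  have h3 : (ξ p).natAbs ∣ w.natAbs := by
    have : Finset.univ.gcd (fun i => (ξ i).natAbs) = 1 := hprim
    rw [this] at h2
    simpa using h2
  exact Int.natAbs_dvd_natAbs.mp h3

lemma Wdg_ne_zero_of_short (x z : Fin (n+1) → ℤ) (hprim : natGcd x = 1) (hz : z ≠ 0)
    {p : Fin (n+1)} (T : ℝ) (hzT : ∀ a, |(z a : ℝ)| ≤ T) (hT : T < |(x p : ℝ)|) :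
    Wdg (ic x) (ic z) ≠ 0 := by
  intro h0
  have hs : ∀ i j : Fin (n+1), i < j → x i * z j = x j * z i := by
    intro i j hij
    have h1 : Xof (Wdg (ic x) (ic z)) {i, j} = 0 := by
      rw [h0, Xof]; split <;> simp
    rw [Xof_Wdg _ _ hij] at h1
    have h2 : (x i : ℝ) * (z j : ℝ) = (x j : ℝ) * (z i : ℝ) := by
      have : (x i : ℝ) * (z j : ℝ) - (x j : ℝ) * (z i : ℝ) = 0 := by simpa [ic] using h1
      linarith
    exact_mod_cast h2
  have hminor : ∀ i j : Fin (n+1), x i * z j = x j * z i := by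
    intro i j
    rcases lt_trichotomy i j with h | h | h
    · exact hs i j h
    · rw [h]
    · exact (hs j i h).symm
  have hxp : x p ≠ 0 := by
    intro h
    rw [h] at hT
    have := hzT p
    have := abs_nonneg ((z p : ℝ))
    simp at hT
    linarith
  have hdvd : x p ∣ z p := by
    refine prim_dvd x hprim (z p) fun i => ?_
    have : z p * x i = x p * z i := by
      have := hminor i p
      linarith [hminor i p]
    rw [this]
    exact Dvd.intro _ rfl
  obtain ⟨m, hm⟩ := hdvd
  have hza : ∀ a, z a = m * x a := by
    intro a
    have h1 : x p * z a = x a * z p := hminor p a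
    rw [hm] at h1
    have h2 : x p * z a = x p * (m * x a) := by linarith [h1]
    exact mul_left_cancel₀ hxp h2
  have hq : ∃ q, z q ≠ 0 := by
    by_contra h
    push_neg at h
    exact hz (funext h)
  obtain ⟨q, hq⟩ := hq
  have hm0 : m ≠ 0 := fun h => hq (by rw [hza q, h, zero_mul])
  have h1 : |(x p : ℝ)| ≤ |(z p : ℝ)| := by
    rw [hza p]
    push_cast
    rw [abs_mul]
    have h2 : (1:ℝ) ≤ |(m:ℝ)| := by
      have : (1:ℤ) ≤ |m| := Int.one_le_abs hm0
      calc (1:ℝ) ≤ ((|m|:ℤ):ℝ) := by exact_mod_cast this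
      _ = |(m:ℝ)| := by push_cast; ring
    nlinarith [abs_nonneg ((x p : ℝ))]
  linarith [hzT p]

lemma deg2_wedge_ne {θ : Fin n → ℝ} (hθ : LinearIndependent ℚ (Fin.cons (1 : ℝ) θ))
    (hn : 2 ≤ n) (x z : Fin (n+1) → ℤ) (hY : Wdg (ic x) (ic z) ≠ 0) :
    vWedge (yTheta θ) (Wdg (ic x) (ic z)) ≠ 0 := by
  intro h0
  have hex : ∃ S : {S : Finset (Fin (n+1)) // S.card = 2}, Wdg (ic x) (ic z) S ≠ 0 := by
    by_contra h
    push_neg at h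
    exact hY (funext h)
  obtain ⟨S, hS⟩ := hex
  obtain ⟨p, q, hpq, hSpq⟩ := card2_sorted S.2
  set W : Fin (n+1) → Fin (n+1) → ℤ := fun a b => x a * z b - x b * z a with hW
  have hXof : ∀ a b : Fin (n+1), a < b → Xof (Wdg (ic x) (ic z)) {a, b} = (W a b : ℝ) := by
    intro a b hab
    rw [Xof_Wdg _ _ hab, hW]
    push_cast [ic]
    ring
  have hm : W p q ≠ 0 := by
    intro h
    apply hS
    rw [show Wdg (ic x) (ic z) S = Xof (Wdg (ic x) (ic z)) S.1 from (Xof_val _ S).symm, hSpq,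
      hXof p q hpq, h]
    simp
  have hi : ∃ i : Fin (n+1), i ≠ p ∧ i ≠ q := by
    by_contra h
    push_neg at h
    have hsub : (Finset.univ : Finset (Fin (n+1))) ⊆ {p, q} := by
      intro i _
      rcases Classical.em (i = p) with h1 | h1
      · simp [h1]
      · simp [h i h1]
    have h1 := Finset.card_le_card hsub
    rw [Finset.card_univ, Fintype.card_fin] at h1
    have h2 : ({p, q} : Finset (Fin (n+1))).card ≤ 2 := Finset.card_insert_le _ _ |>.trans (by simp)
    omega
  obtain ⟨i, hip, hiq⟩ := hi
  have hco : ∀ a b c : Fin (n+1), a < b → b < c →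
      yTheta θ a * Xof (Wdg (ic x) (ic z)) {b, c}
        - yTheta θ b * Xof (Wdg (ic x) (ic z)) {a, c}
        + yTheta θ c * Xof (Wdg (ic x) (ic z)) {a, b} = 0 := by
    intro a b c hab hbc
    have h1 : Xof (vWedge (yTheta θ) (Wdg (ic x) (ic z))) {a, b, c} = 0 := by
      rw [h0, Xof]; split <;> simp
    rw [Xof_vWedge_triple _ _ hab hbc] at h1
    exact h1
  rcases lt_trichotomy i p with h1 | h1 | h1
  · have hc := hco i p q h1 hpq
    rw [hXof p q hpq, hXof i q (lt_trans h1 hpq), hXof i p h1] at hc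
    refine relation_contra3 hθ (a := i) (b := p) (c := q) hip hiq hpq.ne
      (W p q) (-(W i q)) (W i p) hm ?_
    push_cast
    linarith
  · exact hip h1
  · rcases lt_trichotomy i q with h2 | h2 | h2
    · have hc := hco p i q h1 h2
      rw [hXof i q h2, hXof p q hpq, hXof p i h1] at hc
      refine relation_contra3 hθ (a := i) (b := p) (c := q) hip hiq hpq.ne
        (-(W p q)) (W i q) (W p i) (neg_ne_zero.mpr hm) ?_
      push_cast
      linarith
    · exact hiq h2
    · have hc := hco p q i hpq h2
      rw [hXof q i h2, hXof p i (lt_trans hpq h2), hXof p q hpq] at hc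
      refine relation_contra3 hθ (a := i) (b := p) (c := q) hip hiq hpq.ne
        (W p q) (W q i) (-(W p i)) hm ?_
      push_cast
      linarith

end Gcd

section Finiteness

lemma bounded_integral_finite (B : ℝ) :
    {X : MultiVec n r | mvIntegral X ∧ mvNorm X ≤ B}.Finite := by
  classical
  set I : Set ℤ := {k : ℤ | |(k : ℝ)| ≤ B} with hIdef
  have hI : I.Finite := by
    apply Set.Finite.subset (Set.finite_Icc (-⌈B⌉) ⌈B⌉)
    intro k hk
    have h1 : |(k : ℝ)| ≤ B := hk
    have h2 : ((|k| : ℤ) : ℝ) ≤ B := by push_cast; push_cast at h1; exact h1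
    have h3 : |k| ≤ ⌈B⌉ := by exact_mod_cast le_trans h2 (Int.le_ceil B)
    simp only [Set.mem_Icc]
    constructor
    · linarith [neg_abs_le k]
    · linarith [le_abs_self k]
  have hpi : {g : {S : Finset (Fin (n+1)) // S.card = r} → ℤ | ∀ S, g S ∈ I}.Finite := by
    have heq : {g : {S : Finset (Fin (n+1)) // S.card = r} → ℤ | ∀ S, g S ∈ I}
        = Set.pi Set.univ (fun _ => I) := by
      ext g; simp [Set.mem_pi]
    rw [heq]
    exact Set.Finite.pi fun _ => hI
  apply Set.Finite.subset (hpi.image (fun g => (fun S => ((g S : ℤ) : ℝ) : MultiVec n r)))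
  rintro X ⟨hint, hB⟩
  choose k hk using hint
  refine ⟨k, fun S => ?_, ?_⟩
  · show |(k S : ℝ)| ≤ B
    rw [← hk S]
    exact le_trans (abs_coord_le_mvNorm X S) hB
  · funext S
    exact (hk S).symm

lemma exists_mvNorm_large {A : Set (MultiVec n r)} (hA : A.Infinite)
    (hint : ∀ X ∈ A, mvIntegral X) (B : ℝ) : ∃ X ∈ A, B < mvNorm X := by
  by_contra h
  push_neg at h
  exact hA (Set.Finite.subset (bounded_integral_finite B) fun X hX => ⟨hint X hX, h X hX⟩)

lemma infinite_of_small_values {P : Set (MultiVec n r)} (f : MultiVec n r → ℝ)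
    (h : ∀ c : ℝ, 0 < c → ∃ Y ∈ P, 0 < f Y ∧ f Y < c) : P.Infinite := by
  by_contra hninf
  rw [Set.not_infinite] at hninf
  have hfin := hninf
  obtain ⟨Y1, hY1, hY1p, _⟩ := h 1 one_pos
  set P' := {Y ∈ P | 0 < f Y} with hP'def
  have hP' : P'.Finite := hfin.subset (Set.sep_subset _ _)
  have hne : P'.Nonempty := ⟨Y1, hY1, hY1p⟩
  obtain ⟨Y0, hY0, hmin⟩ := Set.exists_min_image P' f hP' hne
  obtain ⟨Y, hYP, hfp, hflt⟩ := h (f Y0) hY0.2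
  exact absurd (hmin Y ⟨hYP, hfp⟩) (not_le.mpr hflt)

end Finiteness

section Goods

variable (θ : Fin n → ℝ)

/-- The set of `α`-good degree-one integer multivectors. -/
def Gd (α : ℝ) : Set (MultiVec n 1) :=
  {X : MultiVec n 1 | mvIntegral X ∧ X ≠ 0 ∧
    mvNorm (vWedge (yTheta θ) X) ≤ mvNorm X ^ (-α)}

lemma exists_yb : ∃ Yb : ℝ, 1 ≤ Yb ∧ ∀ a, |yTheta θ a| ≤ Yb := by
  obtain ⟨a0, ha0⟩ := Finite.exists_max (fun a => |yTheta θ a|)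
  exact ⟨max 1 |yTheta θ a0|, le_max_left _ _,
    fun a => le_trans (ha0 a) (le_max_right _ _)⟩

lemma abs_coord_V_le (x : Fin (n+1) → ℤ) (a : Fin (n+1)) :
    |(x a : ℝ)| ≤ mvNorm (vecToMulti (ic x)) := by
  have h1 : (x a : ℝ) = Xof (vecToMulti (ic x)) {a} := by rw [Xof_vecToMulti]; rfl
  rw [h1]
  exact abs_Xof_le _ _

lemma mvNorm_V_le (x : Fin (n+1) → ℤ) {B : ℝ} (hBnn : 0 ≤ B) (h : ∀ a, |(x a : ℝ)| ≤ B) :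
    mvNorm (vecToMulti (ic x)) ≤ (2:ℝ)^(n+1) * B := by
  apply mvNorm_le_card_mul _ hBnn
  intro S
  obtain ⟨a, hS⟩ := Finset.card_eq_one.mp S.2
  rw [show vecToMulti (ic x) S = Xof (vecToMulti (ic x)) S.1 from (Xof_val _ S).symm, hS,
    Xof_vecToMulti]
  exact h a

lemma primitive_goods (hθ : LinearIndependent ℚ (Fin.cons (1 : ℝ) θ)) (hn1 : 1 ≤ n)
    (α : ℝ) (hα : 0 < α) (hA : (Gd θ α).Infinite) (B : ℝ) :
    ∃ ξ : Fin (n+1) → ℤ, natGcd ξ = 1 ∧ ξ ≠ 0 ∧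
      B < mvNorm (vecToMulti (ic ξ)) ∧
      mvNorm (vWedge (yTheta θ) (vecToMulti (ic ξ)))
        ≤ mvNorm (vecToMulti (ic ξ)) ^ (-α) := by
  set PG : Set (MultiVec n 1) :=
    {X | (∃ ξ : Fin (n+1) → ℤ, natGcd ξ = 1 ∧ ξ ≠ 0 ∧ X = vecToMulti (ic ξ)) ∧ X ∈ Gd θ α}
    with hPGdef
  have hPGinf : PG.Infinite := by
    apply infinite_of_small_values (f := fun X => mvNorm (vWedge (yTheta θ) X))
    intro c hc
    have hev : ∀ᶠ t : ℝ in Filter.atTop, t ^ (-α) < c :=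
      (tendsto_rpow_neg_atTop hα).eventually_lt_const hc
    obtain ⟨Bc, hBc⟩ := Filter.eventually_atTop.mp hev
    obtain ⟨X₀, hX₀, hX₀big⟩ := exists_mvNorm_large hA (fun X hX => hX.1) (max 1 Bc)
    obtain ⟨hint, hne, hqual⟩ := hX₀
    obtain ⟨x, rfl⟩ := exists_intvec X₀ hint
    have hx0 : x ≠ 0 := by
      intro h
      apply hne
      rw [(vecToMulti_eq_zero_iff (ic x)), ic_eq_zero_iff]
      exact h
    obtain ⟨G, ξ, hG, hxξ, hprim⟩ := exists_primitive x hx0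
    have hξ0 : ξ ≠ 0 := by
      rintro rfl
      apply hx0
      funext i; rw [hxξ i]; simp
    have hic : ic x = fun i => (G : ℝ) * ic ξ i := by
      funext i; rw [ic, ic, hxξ i]; push_cast; ring
    have hVx : vecToMulti (ic x) = fun S => (G:ℝ) * vecToMulti (ic ξ) S := by
      rw [hic, vecToMulti_smul]
    have hWx : vWedge (yTheta θ) (vecToMulti (ic x))
        = fun T => (G:ℝ) * vWedge (yTheta θ) (vecToMulti (ic ξ)) T := by
      rw [hVx, vWedge_smulX]
    have hG1 : (1:ℝ) ≤ (G:ℝ) := by exact_mod_cast hG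
    have hnormx : mvNorm (vecToMulti (ic x)) = G * mvNorm (vecToMulti (ic ξ)) := by
      rw [hVx, mvNorm_const_mul, abs_of_nonneg (by linarith)]
    have hnormw : mvNorm (vWedge (yTheta θ) (vecToMulti (ic x)))
        = G * mvNorm (vWedge (yTheta θ) (vecToMulti (ic ξ))) := by
      rw [hWx, mvNorm_const_mul, abs_of_nonneg (by linarith)]
    have hξne : vecToMulti (ic ξ) ≠ 0 := by
      rw [Ne, vecToMulti_eq_zero_iff, ic_eq_zero_iff]
      exact hξ0
    have hξnormpos : 0 < mvNorm (vecToMulti (ic ξ)) := mvNorm_pos_of_ne_zero hξne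
    have hξle : mvNorm (vecToMulti (ic ξ)) ≤ mvNorm (vecToMulti (ic x)) := by
      rw [hnormx]
      nlinarith
    have hq2 : mvNorm (vWedge (yTheta θ) (vecToMulti (ic ξ)))
        ≤ mvNorm (vecToMulti (ic x)) ^ (-α) := by
      have h1 : mvNorm (vWedge (yTheta θ) (vecToMulti (ic ξ)))
          ≤ mvNorm (vWedge (yTheta θ) (vecToMulti (ic x))) := by
        rw [hnormw]; nlinarith [mvNorm_nonneg (vWedge (yTheta θ) (vecToMulti (ic ξ)))]
      exact le_trans h1 hqual
    have hqξ : mvNorm (vWedge (yTheta θ) (vecToMulti (ic ξ)))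
        ≤ mvNorm (vecToMulti (ic ξ)) ^ (-α) := by
      refine le_trans hq2 (Real.rpow_le_rpow_of_nonpos hξnormpos hξle (by linarith))
    refine ⟨vecToMulti (ic ξ), ⟨⟨ξ, hprim, hξ0, rfl⟩, vecToMulti_integral ξ, hξne, hqξ⟩, ?_, ?_⟩
    · exact mvNorm_pos_of_ne_zero (deg1_wedge_ne hθ hn1 ξ hξ0)
    · refine lt_of_le_of_lt hq2 ?_
      refine hBc _ ?_
      calc Bc ≤ max 1 Bc := le_max_right _ _
      _ ≤ mvNorm (vecToMulti (ic x)) := hX₀big.le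
  obtain ⟨X, hXPG, hXbig⟩ := exists_mvNorm_large hPGinf (fun X hX => hX.2.1) B
  obtain ⟨⟨ξ, hprim, hξ0, rfl⟩, _, _, hq⟩ := hXPG
  exact ⟨ξ, hprim, hξ0, hXbig, hq⟩

end Goods

section Boost

variable (θ : Fin n → ℝ)

lemma hE_of_z (z : Fin (n+1) → ℤ) {T w : ℝ} (hT1 : 1 ≤ T)
    (hz : ∀ i : Fin n, |(z 0 : ℝ) * θ i - (z i.succ : ℝ)| ≤ T ^ (-w)) :
    ∀ a, |ic z a - ic z 0 * yTheta θ a| ≤ T ^ (-w) := by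
  have hEnn : 0 ≤ T ^ (-w) := Real.rpow_nonneg (by linarith) _
  intro a
  refine Fin.cases ?_ ?_ a
  · have : ic z 0 - ic z 0 * yTheta θ 0 = 0 := by
      rw [show yTheta θ 0 = 1 from rfl]; ring
    rw [this]; simpa using hEnn
  · intro i
    have hys : yTheta θ i.succ = θ i := by rw [yTheta, Fin.cons_succ]
    have heq : ic z i.succ - ic z 0 * yTheta θ i.succ
        = -((z 0 : ℝ) * θ i - (z i.succ : ℝ)) := by
      simp only [ic, hys]; ring
    rw [heq, abs_neg]
    exact hz i

lemma boost_goods (hθ : LinearIndependent ℚ (Fin.cons (1 : ℝ) θ)) (hn1 : 1 ≤ n)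
    (γ w₁ : ℝ) (h0 : 0 < γ) (hγ : γ < w₁)
    (hU : ∀ᶠ T : ℝ in Filter.atTop, ∃ z : Fin (n+1) → ℤ, z ≠ 0 ∧ (∀ j, |(z j : ℝ)| ≤ T) ∧
      ∀ i : Fin n, |(z 0 : ℝ) * θ i - (z i.succ : ℝ)| ≤ T ^ (-w₁)) :
    (Gd θ γ).Infinite := by
  obtain ⟨Yb, hYb1, hYb⟩ := exists_yb θ
  set D := (2:ℝ)^(n+1) with hDdef
  have hD1 : (1:ℝ) ≤ D := one_le_pow₀ (by norm_num)
  have hD0 : (0:ℝ) < D := by linarith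
  apply infinite_of_small_values (f := fun X => mvNorm (vWedge (yTheta θ) X))
  intro c hc
  have hev1 : ∀ᶠ T : ℝ in Filter.atTop, D * (2 * (Yb * T ^ (-w₁))) < c := by
    have h1 : Filter.Tendsto (fun T : ℝ => D * (2 * (Yb * T ^ (-w₁)))) Filter.atTop
        (nhds (D * (2 * (Yb * 0)))) := by
      refine Filter.Tendsto.const_mul _ (Filter.Tendsto.const_mul _
        (Filter.Tendsto.const_mul _ ?_))
      exact tendsto_rpow_neg_atTop (by linarith)
    have h2 : D * (2 * (Yb * 0)) = 0 := by ring
    rw [h2] at h1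
    exact h1.eventually_lt_const hc
  have hev2 : ∀ᶠ T : ℝ in Filter.atTop,
      D * (2 * (Yb * T ^ (-w₁))) ≤ (D * T) ^ (-γ) := by
    have hconst : (0:ℝ) < D ^ (-γ) / (2 * D * Yb) := by
      apply div_pos (Real.rpow_pos_of_pos hD0 _)
      nlinarith
    have h1 : ∀ᶠ T : ℝ in Filter.atTop, T ^ (γ - w₁) < D ^ (-γ) / (2 * D * Yb) := by
      have := tendsto_rpow_neg_atTop (y := w₁ - γ) (by linarith)
      have heq : ∀ T : ℝ, T ^ (-(w₁ - γ)) = T ^ (γ - w₁) := by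
        intro T; norm_num
      simp only [heq] at this
      exact this.eventually_lt_const hconst
    filter_upwards [h1, Filter.eventually_ge_atTop (1:ℝ)] with T hT hT1
    have hTpos : (0:ℝ) < T := by linarith
    have hsplit : (D * T) ^ (-γ) = D ^ (-γ) * T ^ (-γ) :=
      Real.mul_rpow (by linarith) (by linarith)
    have hmul : T ^ (γ - w₁) * T ^ (-γ) = T ^ (-w₁) := by
      rw [← Real.rpow_add hTpos, show γ - w₁ + -γ = -w₁ by ring]
    have hTγ : (0:ℝ) < T ^ (-γ) := Real.rpow_pos_of_pos hTpos _
    rw [hsplit]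
    calc D * (2 * (Yb * T ^ (-w₁))) = (2 * D * Yb) * (T ^ (γ - w₁) * T ^ (-γ)) := by
          rw [hmul]; ring
    _ ≤ (2 * D * Yb) * ((D ^ (-γ) / (2 * D * Yb)) * T ^ (-γ)) := by
          have h2 : (0:ℝ) < 2 * D * Yb := by nlinarith
          have := mul_le_mul_of_nonneg_right hT.le hTγ.le
          nlinarith [mul_le_mul_of_nonneg_right hT.le hTγ.le]
    _ = D ^ (-γ) * T ^ (-γ) := by field_simp
  obtain ⟨T, hzex, h1c, h2c, hT1⟩ :=
    (hU.and (hev1.and (hev2.and (Filter.eventually_ge_atTop (1:ℝ))))).exists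
  obtain ⟨z, hz0, hzT, hzerr⟩ := hzex
  have hE := hE_of_z θ z hT1 hzerr
  have hT0 : (0:ℝ) < T := by linarith
  have hEnn : (0:ℝ) ≤ T ^ (-w₁) := Real.rpow_nonneg hT0.le _
  have hXne : vecToMulti (ic z) ≠ 0 := by
    rw [Ne, vecToMulti_eq_zero_iff, ic_eq_zero_iff]
    exact hz0
  have hfpos : 0 < mvNorm (vWedge (yTheta θ) (vecToMulti (ic z))) :=
    mvNorm_pos_of_ne_zero (deg1_wedge_ne hθ hn1 z hz0)
  have hfle : mvNorm (vWedge (yTheta θ) (vecToMulti (ic z)))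
      ≤ D * (2 * (Yb * T ^ (-w₁))) := by
    exact deg1_bound (yTheta θ) (ic z) (T ^ (-w₁)) Yb hEnn (by linarith) hYb hE
  have hXle : mvNorm (vecToMulti (ic z)) ≤ D * T := mvNorm_V_le z hT0.le hzT
  have hq : mvNorm (vWedge (yTheta θ) (vecToMulti (ic z)))
      ≤ mvNorm (vecToMulti (ic z)) ^ (-γ) := by
    refine le_trans hfle (le_trans h2c ?_)
    exact Real.rpow_le_rpow_of_nonpos (mvNorm_pos_of_ne_zero hXne) hXle (by linarith)
  exact ⟨vecToMulti (ic z), ⟨vecToMulti_integral z, hXne, hq⟩, hfpos, lt_of_le_of_lt hfle h1c⟩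

end Boost

section Main

variable (θ : Fin n → ℝ)

lemma main_construction (hθ : LinearIndependent ℚ (Fin.cons (1 : ℝ) θ)) (hn : 2 ≤ n)
    (α β v : ℝ) (hβ0 : 0 < β) (hβα : β ≤ α) (hKEY : v * (1 - β) < α + β)
    (hA : (Gd θ α).Infinite)
    (hU : ∀ᶠ T : ℝ in Filter.atTop, ∃ z : Fin (n+1) → ℤ, z ≠ 0 ∧ (∀ j, |(z j : ℝ)| ≤ T) ∧
      ∀ i : Fin n, |(z 0 : ℝ) * θ i - (z i.succ : ℝ)| ≤ T ^ (-β)) :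
    {Y : MultiVec n 2 | mvIntegral Y ∧ Y ≠ 0 ∧
      mvNorm (vWedge (yTheta θ) Y) ≤ mvNorm Y ^ (-v)}.Infinite := by
  have hα0 : 0 < α := lt_of_lt_of_le hβ0 hβα
  set D := (2:ℝ)^(n+1) with hDdef
  have hD1 : (1:ℝ) ≤ D := one_le_pow₀ (by norm_num)
  have hD0 : (0:ℝ) < D := by linarith
  set K := (2*D) ^ β with hKdef
  have hK0 : 0 < K := Real.rpow_pos_of_pos (by linarith) _
  set C1 := 3 * D * K with hC1def
  have hC10 : 0 < C1 := by nlinarith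
  set C2 := D * (1 + 2*K) with hC2def
  have hC20 : 0 < C2 := by nlinarith
  set η := α + β - v*(1-β) with hηdef
  have hη0 : 0 < η := by rw [hηdef]; linarith
  obtain ⟨T₀, hT₀⟩ := Filter.eventually_atTop.mp hU
  apply infinite_of_small_values (f := fun Y => mvNorm (vWedge (yTheta θ) Y))
  intro c hc
  have hev : ∀ᶠ N : ℝ in Filter.atTop,
      2*D ≤ N ∧ T₀ ≤ N/D - 1 ∧ C1 * N ^ (-(α+β)) < c ∧ C1 * N ^ (-(α+β)) ≤ 1 ∧
      C1 * N ^ (-η) ≤ C2 ^ (-v) := by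
    have e1 := Filter.eventually_ge_atTop (2*D)
    have e2 : ∀ᶠ N : ℝ in Filter.atTop, T₀ ≤ N/D - 1 := by
      have htend : Filter.Tendsto (fun N : ℝ => N/D - 1) Filter.atTop Filter.atTop := by
        simpa [sub_eq_add_neg] using
          Filter.tendsto_atTop_add_const_right Filter.atTop (-1 : ℝ)
            (Filter.Tendsto.atTop_div_const hD0 Filter.tendsto_id)
      exact htend.eventually_ge_atTop T₀
    have etend : Filter.Tendsto (fun N : ℝ => C1 * N ^ (-(α+β))) Filter.atTop (nhds 0) := by
      have h1 := tendsto_rpow_neg_atTop (y := α+β) (by linarith)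
      have h2 := h1.const_mul C1
      simpa using h2
    have e3 : ∀ᶠ N : ℝ in Filter.atTop, C1 * N ^ (-(α+β)) < c := etend.eventually_lt_const hc
    have e4 : ∀ᶠ N : ℝ in Filter.atTop, C1 * N ^ (-(α+β)) ≤ 1 :=
      (etend.eventually_lt_const one_pos).mono fun N h => h.le
    have e5 : ∀ᶠ N : ℝ in Filter.atTop, C1 * N ^ (-η) ≤ C2 ^ (-v) := by
      have h1 := tendsto_rpow_neg_atTop (y := η) hη0
      have h2 := h1.const_mul C1
      simp only [mul_zero] at h2
      exact (h2.eventually_lt_const (Real.rpow_pos_of_pos hC20 _)).mono fun N h => h.le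
    filter_upwards [e1, e2, e3, e4, e5] with N h1 h2 h3 h4 h5
    exact ⟨h1, h2, h3, h4, h5⟩
  obtain ⟨N₀, hN₀⟩ := Filter.eventually_atTop.mp hev
  obtain ⟨ξ, hprim, hξ0, hNbig, hqual⟩ :=
    primitive_goods θ hθ (by omega) α hα0 hA (max N₀ 1)
  set N := mvNorm (vecToMulti (ic ξ)) with hNdef
  have hN1 : (1:ℝ) ≤ N := le_trans (le_max_right _ _) hNbig.le
  obtain ⟨hcond1, hcond2, hcond3, hcond4, hcond5⟩ :=
    hN₀ N (le_trans (le_max_left _ _) hNbig.le)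
  have hN0 : (0:ℝ) < N := by linarith
  obtain ⟨p, hp⟩ := Finite.exists_max (fun a => |(ξ a : ℝ)|)
  set H := |(ξ p : ℝ)| with hHdef
  have hHnn : (0:ℝ) ≤ H := hHdef ▸ abs_nonneg _
  have hHN : N ≤ D * H := mvNorm_V_le ξ hHnn hp
  have hHleN : H ≤ N := abs_coord_V_le ξ p
  set T := H - 1 with hTdef
  have hNDle : N/D ≤ H := by rw [div_le_iff₀ hD0]; nlinarith
  have hTlow : N/D - 1 ≤ T := by rw [hTdef]; linarith
  have h2ND : 2 ≤ N/D := by rw [le_div_iff₀ hD0]; linarith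
  have hT1 : 1 ≤ T := by linarith
  have hT0 : 0 < T := by linarith
  have hhalf : N/D = N/(2*D) + N/(2*D) := by field_simp; ring
  have h1ND2 : 1 ≤ N/(2*D) := by
    rw [le_div_iff₀ (by linarith : (0:ℝ) < 2*D)]; linarith
  have hTN2D : N/(2*D) ≤ T := by
    have : N/D - 1 ≥ N/(2*D) := by rw [hhalf]; linarith
    linarith
  obtain ⟨z, hz0, hzT, hzerr⟩ := hT₀ T (by linarith)
  have hE := hE_of_z θ z hT1 hzerr
  set E := T ^ (-β) with hEdef
  have hEnn : 0 ≤ E := Real.rpow_nonneg hT0.le _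
  set Mq := mvNorm (vWedge (yTheta θ) (vecToMulti (ic ξ))) with hMqdef
  have hMqnn : 0 ≤ Mq := mvNorm_nonneg _
  have hM : ∀ i j : Fin (n+1), i < j →
      |yTheta θ i * ic ξ j - yTheta θ j * ic ξ i| ≤ Mq := by
    intro i j hij
    have h1 : yTheta θ i * ic ξ j - yTheta θ j * ic ξ i
        = Xof (Wdg (yTheta θ) (ic ξ)) {i, j} := (Xof_Wdg _ _ hij).symm
    rw [h1]
    exact abs_Xof_le _ _
  set Y := Wdg (ic ξ) (ic z) with hYdef
  have hYne : Y ≠ 0 := by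
    refine Wdg_ne_zero_of_short ξ z hprim hz0 (p := p) T hzT ?_
    rw [hTdef, ← hHdef]; linarith
  have hYint : mvIntegral Y := Wdg_integral ξ z
  have hwne : vWedge (yTheta θ) Y ≠ 0 := deg2_wedge_ne hθ hn ξ z hYne
  have hQ : mvNorm (vWedge (yTheta θ) Y) ≤ D * (3 * (E * Mq)) :=
    quality_bound (yTheta θ) (ic ξ) (ic z) Mq E hMqnn hEnn hM hE
  have hxN : ∀ a, |ic ξ a| ≤ N := fun a => abs_coord_V_le ξ a
  have hZb : mvNorm Y ≤ D * (T * Mq + 2 * (N * E)) :=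
    size_bound (yTheta θ) (ic ξ) (ic z) Mq E T N hMqnn hEnn hT0.le hN0.le hM hE (hzT 0) hxN
  have hEK : E ≤ K * N ^ (-β) := by
    have h1 : T ^ (-β) ≤ (N/(2*D)) ^ (-β) :=
      Real.rpow_le_rpow_of_nonpos (by positivity) hTN2D (by linarith)
    have h2 : (N/(2*D)) ^ (-β) = N ^ (-β) * (2*D) ^ β := by
      rw [Real.div_rpow hN0.le (by linarith : (0:ℝ) ≤ 2*D), div_eq_mul_inv,
        Real.rpow_neg (by linarith : (0:ℝ) ≤ 2*D), inv_inv]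
    rw [hEdef]
    refine le_trans h1 (le_of_eq ?_)
    rw [h2, hKdef]; ring
  have hMN : Mq ≤ N ^ (-α) := hqual
  have hQ2 : mvNorm (vWedge (yTheta θ) Y) ≤ C1 * N ^ (-(α+β)) := by
    have h1 : E * Mq ≤ (K * N ^ (-β)) * N ^ (-α) :=
      mul_le_mul hEK hMN hMqnn (by positivity)
    have h2 : N ^ (-β) * N ^ (-α) = N ^ (-(α+β)) := by
      rw [← Real.rpow_add hN0]; ring_nf
    calc mvNorm (vWedge (yTheta θ) Y) ≤ D * (3 * (E * Mq)) := hQ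
    _ ≤ D * (3 * ((K * N ^ (-β)) * N ^ (-α))) :=
        mul_le_mul_of_nonneg_left (by linarith) hD0.le
    _ = C1 * N ^ (-(α+β)) := by rw [hC1def, ← h2]; ring
  have hZ2 : mvNorm Y ≤ C2 * N ^ (1-β) := by
    have hN1a : N * N ^ (-α) = N ^ (1-α) := by
      rw [show N * N ^ (-α) = N ^ (1:ℝ) * N ^ (-α) by rw [Real.rpow_one],
        ← Real.rpow_add hN0]
      ring_nf
    have hN1b : N * N ^ (-β) = N ^ (1-β) := by
      rw [show N * N ^ (-β) = N ^ (1:ℝ) * N ^ (-β) by rw [Real.rpow_one],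
        ← Real.rpow_add hN0]
      ring_nf
    have h1 : T * Mq ≤ N ^ (1-α) := by
      have hTN : T ≤ N := by linarith
      calc T * Mq ≤ N * N ^ (-α) := mul_le_mul hTN hMN hMqnn hN0.le
      _ = N ^ (1-α) := hN1a
    have h2 : N ^ (1-α) ≤ N ^ (1-β) :=
      Real.rpow_le_rpow_of_exponent_le hN1 (by linarith)
    have h3 : N * E ≤ K * N ^ (1-β) := by
      calc N * E ≤ N * (K * N ^ (-β)) := mul_le_mul_of_nonneg_left hEK hN0.le
      _ = K * (N * N ^ (-β)) := by ring
      _ = K * N ^ (1-β) := by rw [hN1b]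
    calc mvNorm Y ≤ D * (T * Mq + 2 * (N * E)) := hZb
    _ ≤ D * (N ^ (1-β) + 2 * (K * N ^ (1-β))) :=
        mul_le_mul_of_nonneg_left (by linarith) hD0.le
    _ = C2 * N ^ (1-β) := by rw [hC2def]; ring
  have hfpos : 0 < mvNorm (vWedge (yTheta θ) Y) := mvNorm_pos_of_ne_zero hwne
  have hYnorm1 : 1 ≤ mvNorm Y := one_le_mvNorm hYint hYne
  have hgoal : mvNorm (vWedge (yTheta θ) Y) ≤ mvNorm Y ^ (-v) := by
    rcases le_or_gt 0 v with hv | hv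
    · have hupper : (C2 * N ^ (1-β)) ^ (-v) ≤ mvNorm Y ^ (-v) :=
        Real.rpow_le_rpow_of_nonpos (by linarith) hZ2 (by linarith)
      refine le_trans hQ2 (le_trans ?_ hupper)
      have hsplit : (C2 * N ^ (1-β)) ^ (-v) = C2 ^ (-v) * N ^ (-v*(1-β)) := by
        rw [Real.mul_rpow hC20.le (Real.rpow_nonneg hN0.le _), ← Real.rpow_mul hN0.le,
          show (1-β)*(-v) = -v*(1-β) by ring]
      rw [hsplit]
      have hdecomp : N ^ (-(α+β)) = N ^ (-v*(1-β)) * N ^ (-η) := by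
        rw [← Real.rpow_add hN0]
        congr 1
        rw [hηdef]; ring
      calc C1 * N ^ (-(α+β)) = (C1 * N ^ (-η)) * N ^ (-v*(1-β)) := by
            rw [hdecomp]; ring
      _ ≤ C2 ^ (-v) * N ^ (-v*(1-β)) :=
            mul_le_mul_of_nonneg_right hcond5 (Real.rpow_nonneg hN0.le _)
    · have h1 : (1:ℝ) ≤ mvNorm Y ^ (-v) := Real.one_le_rpow hYnorm1 (by linarith)
      exact le_trans hQ2 (le_trans hcond4 h1)
  exact ⟨Y, ⟨hYint, hYne, hgoal⟩, hfpos, lt_of_le_of_lt hQ2 hcond3⟩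

end Main

end GoingUp

/-- **Going-up transfer, inequality (2.2).** For `Θ ∈ ℝⁿ` (`n ≥ 2`) with `1, θ₁, …, θₙ`
linearly independent over `ℚ`: for all reals `ω, w_hat` with `-1 ≤ ω < ω_0(Θ)` and
`0 < w_hat < min(1, ω̂_0(Θ))`, one has `ω_1(Θ) ≥ (ω + w_hat)/(1 - w_hat)`. -/
theorem going_up_transfer_refined (n : ℕ) (hn : 2 ≤ n) (θ : Fin n → ℝ)
    (hθ : LinearIndependent ℚ (Fin.cons (1 : ℝ) θ))
    (ω w_hat : ℝ) (hω1 : -1 ≤ ω) (hω : (ω : EReal) < omegaExp n θ 0)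
    (hw_hat0 : 0 < w_hat) (hw_hat1 : w_hat < 1) (hw_hat : (w_hat : EReal) < omegaHat0 n θ) :
    (((ω + w_hat) / (1 - w_hat) : ℝ) : EReal) ≤ omegaExp n θ 1 := by
  set v := (ω + w_hat) / (1 - w_hat) with hvdef
  have h1w : 0 < 1 - w_hat := by linarith
  have h1wne : (1:ℝ) - w_hat ≠ 0 := ne_of_gt h1w
  obtain ⟨W, hWmem, hWgt⟩ := lt_sSup_iff.mp hω
  obtain ⟨ω₁, rfl, hAinf⟩ := hWmem
  have hω₁ : ω < ω₁ := by exact_mod_cast hWgt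
  obtain ⟨W2, hW2mem, hW2gt⟩ := lt_sSup_iff.mp hw_hat
  obtain ⟨w₁, rfl, hUev⟩ := hW2mem
  have hw₁ : w_hat < w₁ := by exact_mod_cast hW2gt
  set β'' := (w_hat + w₁) / 2 with hβ''def
  have hβ''l : w_hat < β'' := by rw [hβ''def]; linarith
  have hβ''r : β'' < w₁ := by rw [hβ''def]; linarith
  set α := max ω₁ β'' with hαdef
  set β := min w₁ α with hβdef
  have hαω : ω < α := lt_of_lt_of_le hω₁ (le_max_left _ _)
  have hβw : w_hat < β := by
    rcases le_total w₁ α with h | h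
    · rw [hβdef, min_eq_left h]; linarith
    · rw [hβdef, min_eq_right h]
      exact lt_of_lt_of_le hβ''l (le_max_right _ _)
  have hβ0 : 0 < β := lt_trans hw_hat0 hβw
  have hβα : β ≤ α := min_le_right _ _
  have hβw₁ : β ≤ w₁ := min_le_left _ _
  have h1v : 0 ≤ 1 + v := by
    have h : 1 + v = (1 + ω) / (1 - w_hat) := by
      rw [hvdef]; field_simp; ring
    rw [h]
    exact div_nonneg (by linarith) h1w.le
  have h0 : v - w_hat * (1 + v) - ω = 0 := by
    rw [hvdef]; field_simp; ring
  have hKEY : v * (1 - β) < α + β := by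
    have hexp : w_hat * (1 + v) ≤ β * (1 + v) :=
      mul_le_mul_of_nonneg_right hβw.le h1v
    nlinarith
  have hUβ : ∀ᶠ T : ℝ in Filter.atTop, ∃ z : Fin (n+1) → ℤ, z ≠ 0 ∧
      (∀ j, |(z j : ℝ)| ≤ T) ∧
      ∀ i : Fin n, |(z 0 : ℝ) * θ i - (z i.succ : ℝ)| ≤ T ^ (-β) := by
    filter_upwards [hUev, Filter.eventually_ge_atTop (1:ℝ)] with T hT hT1
    obtain ⟨z, hz0, hzT, hzerr⟩ := hT
    exact ⟨z, hz0, hzT, fun i => le_trans (hzerr i)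
      (Real.rpow_le_rpow_of_exponent_le hT1 (by linarith))⟩
  have hAα : (GoingUp.Gd θ α).Infinite := by
    rcases le_total β'' ω₁ with h | h
    · have hcase : α = ω₁ := by rw [hαdef]; exact max_eq_left h
      rw [hcase]
      exact hAinf
    · have hcase : α = β'' := by rw [hαdef]; exact max_eq_right h
      rw [hcase]
      exact GoingUp.boost_goods θ hθ (by omega) β'' w₁ (by linarith) hβ''r hUev
  have hmain := GoingUp.main_construction θ hθ hn α β v hβ0 hβα hKEY hAα hUβ
  exact le_sSup ⟨v, rfl, hmain⟩
end
end
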